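/- arXiv:math-ph/0602015 — 5 statements merged into one kernel-verified Lean document; each statement's English description precedes it below -/
import Mathlib

section
/- For every nonnegative integer k and positive integer N, the number c_k = (1/((k+1)(k+2)))[∏_{j=1}^{k+1}(N+j) − ∏_{j=1}^{k+1}(N−j)] is a nonnegative integer. -/
lemma exists_dvd_add (n : ℕ) (hn : 0 < n) (a : ℤ) :
    ∃ j ∈ Finset.Icc 1 n, (n : ℤ) ∣ a + j := by
  rcases eq_or_ne (a % (n : ℤ)) 0 with h | h
  · exact ⟨n, Finset.mem_Icc.mpr ⟨hn, le_rfl⟩,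
      dvd_add (Int.dvd_of_emod_eq_zero h) dvd_rfl⟩
  · have hn' : (0:ℤ) < n := by exact_mod_cast hn
    have h0 : 0 ≤ a % (n:ℤ) := Int.emod_nonneg a (by positivity)
    have h1 : a % (n:ℤ) < n := Int.emod_lt_of_pos a hn'
    refine ⟨((n:ℤ) - a % n).toNat, Finset.mem_Icc.mpr ⟨by omega, by omega⟩, ?_⟩
    have hcast : (((((n:ℤ)) - a % n).toNat : ℤ)) = (n:ℤ) - a % n := by omega
    rw [hcast]
    have := Int.mul_ediv_add_emod a (n:ℤ)
    have h2 : a + ((n:ℤ) - a % n) = (n:ℤ) * (a / n + 1) := by linarith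
    rw [h2]
    exact Dvd.intro _ rfl

/-- For every nonnegative integer `k` and positive integer `N`, the number
`c_k = (1/((k+1)(k+2)))[∏_{j=1}^{k+1}(N+j) − ∏_{j=1}^{k+1}(N−j)]` is a
nonnegative integer. -/
theorem stmt_2 (N : ℕ) (hN : 0 < N) (k : ℕ) :
    ∃ m : ℕ,
      ((∏ j ∈ Finset.Icc 1 (k+1), ((N : ℚ) + j)) -
        ∏ j ∈ Finset.Icc 1 (k+1), ((N : ℚ) - j)) / (((k:ℚ)+1) * ((k:ℚ)+2))
      = (m : ℚ) := by
  set A : ℤ := ∏ j ∈ Finset.Icc 1 (k+1), ((N : ℤ) + j) with hA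
  set B : ℤ := ∏ j ∈ Finset.Icc 1 (k+1), ((N : ℤ) - j) with hB
  -- (k+1) divides A
  have hA1 : ((k:ℤ)+1) ∣ A := by
    obtain ⟨j, hj, hd⟩ := exists_dvd_add (k+1) (Nat.succ_pos k) (N : ℤ)
    have hp := Finset.dvd_prod_of_mem (fun j : ℕ => (N : ℤ) + (j:ℤ)) hj
    calc ((k:ℤ)+1) = ((k+1 : ℕ) : ℤ) := by push_cast; ring
    _ ∣ (N : ℤ) + j := hd
    _ ∣ A := hp
  have hB1 : ((k:ℤ)+1) ∣ B := by
    obtain ⟨j, hj, hd⟩ := exists_dvd_add (k+1) (Nat.succ_pos k) (-(N : ℤ))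
    have hd' : ((k+1 : ℕ) : ℤ) ∣ (N : ℤ) - j := by
      have := dvd_neg.mpr hd
      simpa [neg_add, sub_eq_add_neg, add_comm] using this
    have hp := Finset.dvd_prod_of_mem (fun j : ℕ => (N : ℤ) - (j:ℤ)) hj
    calc ((k:ℤ)+1) = ((k+1 : ℕ) : ℤ) := by push_cast; ring
    _ ∣ (N : ℤ) - j := hd'
    _ ∣ B := hp
  -- (k+2) divides A - B
  have hAB2 : ((k:ℤ)+2) ∣ A - B := by
    have hz : ((A : ZMod (k+2)) = (B : ZMod (k+2))) := by
      rw [hA, hB]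
      push_cast
      refine Finset.prod_nbij' (fun j => k+2-j) (fun j => k+2-j) ?_ ?_ ?_ ?_ ?_
      · intro a ha
        simp only [Finset.mem_Icc] at *
        omega
      · intro a ha
        simp only [Finset.mem_Icc] at *
        omega
      · intro a ha
        simp only [Finset.mem_Icc] at ha
        show k+2-(k+2-a) = a
        omega
      · intro a ha
        simp only [Finset.mem_Icc] at ha
        show k+2-(k+2-a) = a
        omega
      · intro a ha
        simp only [Finset.mem_Icc] at ha
        show (N : ZMod (k+2)) + (a : ZMod (k+2)) = (N : ZMod (k+2)) - ((k+2-a : ℕ) : ZMod (k+2))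
        have h3 : ((k+2-a : ℕ) : ZMod (k+2)) = -(a : ZMod (k+2)) := by
          have h1 : (k+2-a) + a = k+2 := by omega
          have h2 : (((k+2-a) + a : ℕ) : ZMod (k+2)) = 0 := by
            rw [h1]; exact_mod_cast ZMod.natCast_self (k+2)
          push_cast at h2
          linear_combination h2
        rw [h3]
        ring
    have hmod : (A : ℤ) ≡ B [ZMOD ((k:ℤ)+2)] := by
      have he : ((k:ℤ)+2) = ((k+2:ℕ) : ℤ) := by push_cast; ring
      rw [he]
      exact (ZMod.intCast_eq_intCast_iff' A B (k+2)).mp (by exact_mod_cast hz)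
    exact Int.ModEq.dvd hmod.symm
  -- combine
  have hcop : IsCoprime ((k:ℤ)+1) ((k:ℤ)+2) := ⟨-1, 1, by ring⟩
  have hdvd : (((k:ℤ)+1) * ((k:ℤ)+2)) ∣ A - B :=
    hcop.mul_dvd (dvd_sub hA1 hB1) hAB2
  -- nonnegativity
  have hle : B ≤ A := by
    rcases le_or_gt N (k+1) with hcase | hcase
    · have hBz : B = 0 := by
        rw [hB]
        refine Finset.prod_eq_zero (Finset.mem_Icc.mpr ⟨hN, hcase⟩) ?_
        simp
      rw [hBz, hA]
      apply Finset.prod_nonneg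
      intro j hj
      positivity
    · rw [hA, hB]
      apply Finset.prod_le_prod
      · intro j hj
        simp only [Finset.mem_Icc] at hj
        have : (j:ℤ) ≤ (N:ℤ) := by exact_mod_cast le_of_lt (lt_of_le_of_lt hj.2 hcase)
        linarith
      · intro j hj
        simp only [Finset.mem_Icc] at hj
        have : (0:ℤ) ≤ j := by positivity
        linarith
  obtain ⟨t, ht⟩ := hdvd
  have hpos : (0:ℤ) < ((k:ℤ)+1) * ((k:ℤ)+2) := by positivity
  have htnn : 0 ≤ t := by
    by_contra hc
    push_neg at hc
    nlinarith
  refine ⟨t.toNat, ?_⟩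
  have hAq : ((A : ℚ)) = ∏ j ∈ Finset.Icc 1 (k+1), ((N : ℚ) + j) := by
    rw [hA]; push_cast; rfl
  have hBq : ((B : ℚ)) = ∏ j ∈ Finset.Icc 1 (k+1), ((N : ℚ) - j) := by
    rw [hB]; push_cast; rfl
  rw [← hAq, ← hBq]
  have hne : (((k:ℚ)+1) * ((k:ℚ)+2)) ≠ 0 := by positivity
  rw [div_eq_iff hne]
  have h5 : A - B = (((k:ℤ)+1)*((k:ℤ)+2)) * (t.toNat : ℤ) := by
    rw [Int.toNat_of_nonneg htnn]; exact ht
  calc ((A:ℚ)) - (B:ℚ) = ((A - B : ℤ) : ℚ) := by push_cast; ring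
  _ = ((t.toNat : ℕ) : ℚ) * (((k:ℚ)+1) * ((k:ℚ)+2)) := by rw [h5]; push_cast; ring
end

section
/- For the normalized Haar measure on U(N) and any fixed indices a, b, j, k, l ∈ {1,…,N}, one has ∫_{U(N)} u_{al} ū_{jl} u_{kl} ū_{bl} dU = (δ_{aj}δ_{kb} + δ_{ab}δ_{kj}) / (N(N+1)), where u_{ij} denotes the (i,j) matrix entry of U. -/
set_option linter.unusedSectionVars false
open MeasureTheory Matrix Complex

namespace Stmt8Aux

abbrev UG (N : ℕ) := Matrix.unitaryGroup (Fin N) ℂ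

variable {N : ℕ}

lemma cont_entry (i j : Fin N) :
    Continuous fun U : UG N => (U : Matrix (Fin N) (Fin N) ℂ) i j :=
  (continuous_apply j).comp ((continuous_apply i).comp continuous_subtype_val)

lemma col_sum (U : UG N) (l : Fin N) :
    ∑ m, (starRingEnd ℂ) ((U : Matrix (Fin N) (Fin N) ℂ) m l) *
      (U : Matrix (Fin N) (Fin N) ℂ) m l = 1 := by
  have h := Matrix.UnitaryGroup.star_mul_self U
  have h2 := congrFun (congrFun h l) l
  simpa [Matrix.mul_apply, Matrix.conjTranspose_apply, Matrix.one_apply] using h2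

lemma entry_norm_le_one (U : UG N) (i j : Fin N) :
    ‖(U : Matrix (Fin N) (Fin N) ℂ) i j‖ ≤ 1 := by
  have h := col_sum U j
  have h2 : ∑ m, (Complex.normSq ((U : Matrix (Fin N) (Fin N) ℂ) m j) : ℂ) = 1 := by
    rw [← h]; congr 1; funext m
    rw [mul_comm, Complex.mul_conj]
  have h3 : ∑ m, Complex.normSq ((U : Matrix (Fin N) (Fin N) ℂ) m j) = 1 := by
    exact_mod_cast h2
  have h4 : Complex.normSq ((U : Matrix (Fin N) (Fin N) ℂ) i j) ≤ 1 := by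
    rw [← h3]
    exact Finset.single_le_sum (f := fun m => Complex.normSq ((U : Matrix (Fin N) (Fin N) ℂ) m j)) (fun m _ => Complex.normSq_nonneg _) (Finset.mem_univ i)
  have h5 : ‖(U : Matrix (Fin N) (Fin N) ℂ) i j‖ ^ 2 ≤ 1 := by
    rwa [← Complex.sq_norm] at h4
  nlinarith [norm_nonneg ((U : Matrix (Fin N) (Fin N) ℂ) i j)]

end Stmt8Aux

namespace Stmt8Aux

variable {N : ℕ} [MeasurableSpace (UG N)] [BorelSpace (UG N)]
  (μ : Measure (UG N)) [IsProbabilityMeasure μ]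

/-- The monomial of degree (2,2). -/
def mon (x y z w l : Fin N) (U : UG N) : ℂ :=
  (U : Matrix (Fin N) (Fin N) ℂ) x l * (starRingEnd ℂ) ((U : Matrix (Fin N) (Fin N) ℂ) y l) *
    (U : Matrix (Fin N) (Fin N) ℂ) z l * (starRingEnd ℂ) ((U : Matrix (Fin N) (Fin N) ℂ) w l)

def mon2 (x y l : Fin N) (U : UG N) : ℂ :=
  (U : Matrix (Fin N) (Fin N) ℂ) x l * (starRingEnd ℂ) ((U : Matrix (Fin N) (Fin N) ℂ) y l)

lemma cont_mon (x y z w l : Fin N) : Continuous (mon x y z w l) :=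
  (((cont_entry x l).mul (Complex.continuous_conj.comp (cont_entry y l))).mul
    (cont_entry z l)).mul (Complex.continuous_conj.comp (cont_entry w l))

lemma cont_mon2 (x y l : Fin N) : Continuous (mon2 x y l) :=
  (cont_entry x l).mul (Complex.continuous_conj.comp (cont_entry y l))

lemma integrable_mon (x y z w l : Fin N) : Integrable (mon x y z w l) μ := by
  refine ⟨(cont_mon x y z w l).aestronglyMeasurable, ?_⟩
  refine HasFiniteIntegral.of_bounded (C := 1) (ae_of_all _ fun U => ?_)
  unfold mon
  simp only [norm_mul, RingHomIsometric.norm_map]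
  have h1 := entry_norm_le_one U x l
  have h2 := entry_norm_le_one U y l
  have h3 := entry_norm_le_one U z l
  have h4 := entry_norm_le_one U w l
  have n1 := norm_nonneg ((U : Matrix (Fin N) (Fin N) ℂ) x l)
  have n2 := norm_nonneg ((U : Matrix (Fin N) (Fin N) ℂ) y l)
  have n3 := norm_nonneg ((U : Matrix (Fin N) (Fin N) ℂ) z l)
  have n4 := norm_nonneg ((U : Matrix (Fin N) (Fin N) ℂ) w l)
  exact mul_le_one₀ (mul_le_one₀ (mul_le_one₀ h1 n2 h2) n3 h3) n4 h4

lemma integrable_mon2 (x y l : Fin N) : Integrable (mon2 x y l) μ := by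
  refine ⟨(cont_mon2 x y l).aestronglyMeasurable, ?_⟩
  refine HasFiniteIntegral.of_bounded (C := 1) (ae_of_all _ fun U => ?_)
  unfold mon2
  simp only [norm_mul, RingHomIsometric.norm_map]
  have h1 := entry_norm_le_one U x l
  have h2 := entry_norm_le_one U y l
  have n2 := norm_nonneg ((U : Matrix (Fin N) (Fin N) ℂ) y l)
  exact mul_le_one₀ h1 n2 h2

lemma int_left (hleft : ∀ V : UG N, MeasurePreserving (fun U => V * U) μ μ)
    (V : UG N) (f : UG N → ℂ) : ∫ U, f (V * U) ∂μ = ∫ U, f U ∂μ :=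
  (hleft V).integral_comp (Homeomorph.mulLeft V).toMeasurableEquiv.measurableEmbedding f

end Stmt8Aux

namespace Stmt8Aux

variable {N : ℕ} [MeasurableSpace (UG N)] [BorelSpace (UG N)]
  (μ : Measure (UG N)) [IsProbabilityMeasure μ]

lemma I_ne_one' : Complex.I ≠ 1 := by
  intro h
  simpa using congrArg Complex.im h

def dU (c : Fin N) : UG N :=
  ⟨Matrix.diagonal (fun i => if i = c then Complex.I else 1), by
    rw [Matrix.mem_unitaryGroup_iff', Matrix.star_eq_conjTranspose,
      Matrix.diagonal_conjTranspose, Matrix.diagonal_mul_diagonal]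
    ext i j
    rcases eq_or_ne i j with rfl | hij
    · by_cases h : i = c <;>
        simp [Matrix.diagonal_apply_eq, h, Pi.star_apply, Complex.star_def, Complex.conj_I,
          Matrix.one_apply]
    · simp [Matrix.diagonal_apply_ne _ hij, Matrix.one_apply_ne hij]⟩

lemma dU_entry (c : Fin N) (U : UG N) (i j : Fin N) :
    ((dU c * U : UG N) : Matrix (Fin N) (Fin N) ℂ) i j =
      (if i = c then Complex.I else 1) * (U : Matrix (Fin N) (Fin N) ℂ) i j := by
  have h : ((dU c * U : UG N) : Matrix (Fin N) (Fin N) ℂ) =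
      Matrix.diagonal (fun i => if i = c then Complex.I else 1) *
        (U : Matrix (Fin N) (Fin N) ℂ) := rfl
  rw [h, Matrix.diagonal_mul]

lemma phase_zero (hleft : ∀ V : UG N, MeasurePreserving (fun U => V * U) μ μ)
    (x y z w l c : Fin N)
    (hfac : (if x = c then Complex.I else 1) * (starRingEnd ℂ) (if y = c then Complex.I else 1) *
      (if z = c then Complex.I else 1) * (starRingEnd ℂ) (if w = c then Complex.I else 1) ≠ 1) :
    ∫ U, mon x y z w l U ∂μ = 0 := by
  have h := int_left μ hleft (dU c) (mon x y z w l)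
  have h2 : ∀ U : UG N, mon x y z w l (dU c * U) =
      ((if x = c then Complex.I else 1) * (starRingEnd ℂ) (if y = c then Complex.I else 1) *
        (if z = c then Complex.I else 1) * (starRingEnd ℂ) (if w = c then Complex.I else 1)) *
        mon x y z w l U := by
    intro U
    unfold mon
    rw [dU_entry, dU_entry, dU_entry, dU_entry, _root_.map_mul, _root_.map_mul]
    ring
  simp only [h2] at h
  rw [integral_const_mul] at h
  have h3 : ((if x = c then Complex.I else 1) * (starRingEnd ℂ) (if y = c then Complex.I else 1) *
      (if z = c then Complex.I else 1) * (starRingEnd ℂ) (if w = c then Complex.I else 1) - 1) *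
      (∫ U, mon x y z w l U ∂μ) = 0 := by linear_combination h
  rcases mul_eq_zero.mp h3 with h4 | h4
  · exact absurd (sub_eq_zero.mp h4) hfac
  · exact h4

lemma phase2_zero (hleft : ∀ V : UG N, MeasurePreserving (fun U => V * U) μ μ)
    (x y l : Fin N) (hxy : x ≠ y) :
    ∫ U, mon2 x y l U ∂μ = 0 := by
  have h := int_left μ hleft (dU x) (mon2 x y l)
  have h2 : ∀ U : UG N, mon2 x y l (dU x * U) = Complex.I * mon2 x y l U := by
    intro U
    unfold mon2
    rw [dU_entry, dU_entry, _root_.map_mul]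
    rw [if_pos rfl, if_neg hxy.symm]
    simp only [_root_.map_one]
    ring
  simp only [h2] at h
  rw [integral_const_mul] at h
  have h3 : (Complex.I - 1) * (∫ U, mon2 x y l U ∂μ) = 0 := by linear_combination h
  rcases mul_eq_zero.mp h3 with h4 | h4
  · exact absurd (sub_eq_zero.mp h4) I_ne_one'
  · exact h4

end Stmt8Aux

namespace Stmt8Aux2


noncomputable def r : ℂ := ((Real.sqrt 2 : ℝ) : ℂ)⁻¹

lemma hr2 : r * r = 1 / 2 := by
  unfold r
  rw [← mul_inv]
  rw [← Complex.ofReal_mul, Real.mul_self_sqrt (by norm_num)]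
  norm_num

lemma hcr : (starRingEnd ℂ) r = r := by
  unfold r
  rw [map_inv₀, Complex.conj_ofReal]

variable {N : ℕ}

noncomputable def Rm (a k : Fin N) : Matrix (Fin N) (Fin N) ℂ := fun i j =>
  if i = a then (if j = a then r else if j = k then r else 0)
  else if i = k then (if j = a then -r else if j = k then r else 0)
  else if i = j then 1 else 0

lemma sum_split {M : Type*} [AddCommMonoid M] (a k : Fin N) (hak : a ≠ k) (f : Fin N → M) :
    ∑ m, f m = f a + (f k + ∑ m ∈ (Finset.univ.erase a).erase k, f m) := by
  rw [← Finset.add_sum_erase _ f (Finset.mem_univ a),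
    ← Finset.add_sum_erase _ f (Finset.mem_erase.mpr ⟨hak.symm, Finset.mem_univ k⟩)]

lemma Rm_mem (a k : Fin N) (hak : a ≠ k) : Rm a k ∈ Matrix.unitaryGroup (Fin N) ℂ := by
  rw [Matrix.mem_unitaryGroup_iff', Matrix.star_eq_conjTranspose]
  ext i j
  rw [Matrix.mul_apply]
  simp only [Matrix.conjTranspose_apply]
  rw [sum_split a k hak]
  have hrest : ∑ m ∈ (Finset.univ.erase a).erase k,
      star (Rm a k m i) * Rm a k m j
      = if i ∈ (Finset.univ.erase a).erase k then (if i = j then (1:ℂ) else 0) else 0 := by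
    rw [← Finset.sum_ite_eq' ((Finset.univ.erase a).erase k) i
      (fun _ => if i = j then (1:ℂ) else 0)]
    refine Finset.sum_congr rfl fun m hm => ?_
    have hmk : m ≠ k := (Finset.mem_erase.mp hm).1
    have hma : m ≠ a := (Finset.mem_erase.mp (Finset.mem_erase.mp hm).2).1
    simp only [Rm, if_neg hma, if_neg hmk]
    by_cases hmi : m = i <;> by_cases hmj : m = j <;> simp_all [Complex.star_def]
  rw [hrest]
  simp only [Finset.mem_erase, Finset.mem_univ, and_true]
  by_cases hia : i = a <;> by_cases hik : i = k <;> by_cases hja : j = a <;>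
    by_cases hjk : j = k <;>
    simp_all [Rm, Matrix.one_apply, Complex.star_def, hcr, map_neg, map_zero, _root_.map_one]
  all_goals try (split_ifs with h <;> simp_all)
  all_goals first
      | (linear_combination 2 * hr2)
      | (linear_combination hr2)
      | (linear_combination -hr2)
      | ring
      | (intro h; simp_all)

noncomputable def Rot (a k : Fin N) (hak : a ≠ k) : Matrix.unitaryGroup (Fin N) ℂ :=
  ⟨Rm a k, Rm_mem a k hak⟩

lemma Rot_entry_a (a k : Fin N) (hak : a ≠ k) (U : Matrix.unitaryGroup (Fin N) ℂ) (l : Fin N) :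
    ((Rot a k hak * U : Matrix.unitaryGroup (Fin N) ℂ) : Matrix (Fin N) (Fin N) ℂ) a l =
      r * ((U : Matrix (Fin N) (Fin N) ℂ) a l + (U : Matrix (Fin N) (Fin N) ℂ) k l) := by
  have h : ((Rot a k hak * U : Matrix.unitaryGroup (Fin N) ℂ) : Matrix (Fin N) (Fin N) ℂ) =
      Rm a k * (U : Matrix (Fin N) (Fin N) ℂ) := rfl
  rw [h, Matrix.mul_apply, sum_split a k hak]
  have h1 : Rm a k a a = r := by simp [Rm]
  have h2 : Rm a k a k = r := by simp [Rm, hak, Ne.symm hak]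
  have h3 : ∑ m ∈ (Finset.univ.erase a).erase k, Rm a k a m * (U : Matrix (Fin N) (Fin N) ℂ) m l
      = 0 := by
    refine Finset.sum_eq_zero fun m hm => ?_
    have hmk : m ≠ k := (Finset.mem_erase.mp hm).1
    have hma : m ≠ a := (Finset.mem_erase.mp (Finset.mem_erase.mp hm).2).1
    simp [Rm, hma, hmk]
  rw [h1, h2, h3]
  ring

lemma Rot_entry_k (a k : Fin N) (hak : a ≠ k) (U : Matrix.unitaryGroup (Fin N) ℂ) (l : Fin N) :
    ((Rot a k hak * U : Matrix.unitaryGroup (Fin N) ℂ) : Matrix (Fin N) (Fin N) ℂ) k l =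
      r * ((U : Matrix (Fin N) (Fin N) ℂ) k l - (U : Matrix (Fin N) (Fin N) ℂ) a l) := by
  have h : ((Rot a k hak * U : Matrix.unitaryGroup (Fin N) ℂ) : Matrix (Fin N) (Fin N) ℂ) =
      Rm a k * (U : Matrix (Fin N) (Fin N) ℂ) := rfl
  rw [h, Matrix.mul_apply, sum_split a k hak]
  have h1 : Rm a k k a = -r := by simp [Rm, Ne.symm hak]
  have h2 : Rm a k k k = r := by simp [Rm, Ne.symm hak]
  have h3 : ∑ m ∈ (Finset.univ.erase a).erase k, Rm a k k m * (U : Matrix (Fin N) (Fin N) ℂ) m l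
      = 0 := by
    refine Finset.sum_eq_zero fun m hm => ?_
    have hmk : m ≠ k := (Finset.mem_erase.mp hm).1
    have hma : m ≠ a := (Finset.mem_erase.mp (Finset.mem_erase.mp hm).2).1
    simp [Rm, hma, hmk, Ne.symm hak]
  rw [h1, h2, h3]
  ring

end Stmt8Aux2

namespace Stmt8Aux3
open Stmt8Aux Stmt8Aux2

variable {N : ℕ} [MeasurableSpace (UG N)] [BorelSpace (UG N)]
  (μ : Measure (UG N)) [IsProbabilityMeasure μ]

lemma rot2 (hleft : ∀ V : UG N, MeasurePreserving (fun U => V * U) μ μ) (l a k : Fin N)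
    (hak : a ≠ k) : ∫ U, mon2 a a l U ∂μ = ∫ U, mon2 k k l U ∂μ := by
  have h := int_left μ hleft (Rot a k hak) (mon2 a a l)
  have hexp : ∀ U : UG N, mon2 a a l (Rot a k hak * U) =
      (1/2 : ℂ) * (mon2 a a l U + (mon2 k k l U + (mon2 a k l U + mon2 k a l U))) := by
    intro U
    unfold mon2
    rw [Rot_entry_a a k hak U l, _root_.map_mul, map_add, hcr]
    linear_combination (((U : Matrix (Fin N) (Fin N) ℂ) a l + (U : Matrix (Fin N) (Fin N) ℂ) k l) *
      ((starRingEnd ℂ) ((U : Matrix (Fin N) (Fin N) ℂ) a l) +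
        (starRingEnd ℂ) ((U : Matrix (Fin N) (Fin N) ℂ) k l))) * hr2
  have i1 : Integrable (fun U : UG N => mon2 a k l U + mon2 k a l U) μ :=
    (integrable_mon2 μ a k l).add (integrable_mon2 μ k a l)
  have i2 : Integrable (fun U : UG N => mon2 k k l U + (mon2 a k l U + mon2 k a l U)) μ :=
    (integrable_mon2 μ k k l).add i1
  simp only [hexp] at h
  rw [integral_const_mul,
    integral_add (integrable_mon2 μ a a l) i2,
    integral_add (integrable_mon2 μ k k l) i1,
    integral_add (integrable_mon2 μ a k l) (integrable_mon2 μ k a l),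
    phase2_zero μ hleft a k l hak, phase2_zero μ hleft k a l (Ne.symm hak)] at h
  linear_combination (-2 : ℂ) * h

lemma sum_S (l : Fin N) : ∑ x, ∫ U, mon2 x x l U ∂μ = 1 := by
  rw [← integral_finset_sum _ (fun x _ => integrable_mon2 μ x x l)]
  have hpt : ∀ U : UG N, ∑ x, mon2 x x l U = 1 := by
    intro U
    rw [← col_sum U l]
    refine Finset.sum_congr rfl fun x _ => ?_
    unfold mon2
    ring
  simp only [hpt]
  simp

lemma S_val (hleft : ∀ V : UG N, MeasurePreserving (fun U => V * U) μ μ)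
    (hN : (N : ℂ) ≠ 0) (l x : Fin N) :
    ∫ U, mon2 x x l U ∂μ = 1 / (N : ℂ) := by
  have h := sum_S μ l
  have h2 : ∑ y : Fin N, ∫ U, mon2 y y l U ∂μ = (N : ℂ) * ∫ U, mon2 x x l U ∂μ := by
    rw [Finset.sum_congr rfl (fun y _ => show (∫ U, mon2 y y l U ∂μ) = ∫ U, mon2 x x l U ∂μ by
      rcases eq_or_ne y x with rfl | hyx
      · rfl
      · exact rot2 μ hleft l y x hyx)]
    simp [Finset.sum_const, Finset.card_univ, mul_comm]
  rw [h2] at h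
  field_simp at h ⊢
  linear_combination h

lemma neg_I_ne_one : -Complex.I ≠ 1 := by
  intro h
  simpa using congrArg Complex.im h

lemma neg_one_ne_one : (-1 : ℂ) ≠ 1 := by norm_num

lemma v_aaak (hleft : ∀ V : UG N, MeasurePreserving (fun U => V * U) μ μ) (l a k : Fin N)
    (hak : a ≠ k) : ∫ U, mon a a a k l U ∂μ = 0 :=
  phase_zero μ hleft a a a k l k (by simp [hak, Ne.symm hak, Complex.conj_I, Complex.ext_iff] <;> norm_num)

lemma v_aaka (hleft : ∀ V : UG N, MeasurePreserving (fun U => V * U) μ μ) (l a k : Fin N)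
    (hak : a ≠ k) : ∫ U, mon a a k a l U ∂μ = 0 :=
  phase_zero μ hleft a a k a l k (by simp [hak, Ne.symm hak, Complex.conj_I, Complex.ext_iff] <;> norm_num)

lemma v_akak (hleft : ∀ V : UG N, MeasurePreserving (fun U => V * U) μ μ) (l a k : Fin N)
    (hak : a ≠ k) : ∫ U, mon a k a k l U ∂μ = 0 :=
  phase_zero μ hleft a k a k l k (by simp [hak, Ne.symm hak, Complex.conj_I, Complex.ext_iff] <;> norm_num)

lemma v_akkk (hleft : ∀ V : UG N, MeasurePreserving (fun U => V * U) μ μ) (l a k : Fin N)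
    (hak : a ≠ k) : ∫ U, mon a k k k l U ∂μ = 0 :=
  phase_zero μ hleft a k k k l a (by simp [hak, Ne.symm hak, Complex.conj_I, Complex.ext_iff] <;> norm_num)

lemma v_kaka (hleft : ∀ V : UG N, MeasurePreserving (fun U => V * U) μ μ) (l a k : Fin N)
    (hak : a ≠ k) : ∫ U, mon k a k a l U ∂μ = 0 :=
  phase_zero μ hleft k a k a l k (by simp [hak, Ne.symm hak, Complex.conj_I, Complex.ext_iff] <;> norm_num)

lemma v_kakk (hleft : ∀ V : UG N, MeasurePreserving (fun U => V * U) μ μ) (l a k : Fin N)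
    (hak : a ≠ k) : ∫ U, mon k a k k l U ∂μ = 0 :=
  phase_zero μ hleft k a k k l a (by simp [hak, Ne.symm hak, Complex.conj_I, Complex.ext_iff] <;> norm_num)

lemma rot4_a (hleft : ∀ V : UG N, MeasurePreserving (fun U => V * U) μ μ) (l a k : Fin N)
    (hak : a ≠ k) :
    ∫ U, mon a a a a l U ∂μ = (1/4 : ℂ) * (∫ U, mon a a a a l U ∂μ +
      (∫ U, mon k k k k l U ∂μ + 4 * ∫ U, mon a a k k l U ∂μ)) := by
  have h := int_left μ hleft (Rot a k hak) (mon a a a a l)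
  have hexp : ∀ U : UG N, mon a a a a l (Rot a k hak * U) =
      (1/4 : ℂ) * (mon a a a a l U + (mon k k k k l U + (4 * mon a a k k l U +
        (2 * mon a a a k l U + (2 * mon a a k a l U + (mon a k a k l U +
        (2 * mon a k k k l U + (mon k a k a l U + 2 * mon k a k k l U)))))))) := by
    intro U
    unfold mon
    rw [Rot_entry_a a k hak U l]
    simp only [_root_.map_mul, map_add, hcr]
    set A := (U : Matrix (Fin N) (Fin N) ℂ) a l with hA
    set K := (U : Matrix (Fin N) (Fin N) ℂ) k l with hK
    linear_combination ((r * r + 1/2) * ((A + K) * ((starRingEnd ℂ) A + (starRingEnd ℂ) K) *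
      (A + K) * ((starRingEnd ℂ) A + (starRingEnd ℂ) K))) * hr2
  have j1 := integrable_mon μ a a a a l
  have j2 := integrable_mon μ k k k k l
  have j3 := integrable_mon μ a a k k l
  have j4 := integrable_mon μ a a a k l
  have j5 := integrable_mon μ a a k a l
  have j6 := integrable_mon μ a k a k l
  have j7 := integrable_mon μ a k k k l
  have j8 := integrable_mon μ k a k a l
  have j9 := integrable_mon μ k a k k l
  have i8 : Integrable (fun U : UG N => mon k a k a l U + 2 * mon k a k k l U) μ :=
    j8.add (j9.const_mul 2)
  have i7 : Integrable (fun U : UG N => 2 * mon a k k k l U +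
      (mon k a k a l U + 2 * mon k a k k l U)) μ := (j7.const_mul 2).add i8
  have i6 : Integrable (fun U : UG N => mon a k a k l U + (2 * mon a k k k l U +
      (mon k a k a l U + 2 * mon k a k k l U))) μ := j6.add i7
  have i5 : Integrable (fun U : UG N => 2 * mon a a k a l U + (mon a k a k l U +
      (2 * mon a k k k l U + (mon k a k a l U + 2 * mon k a k k l U)))) μ :=
    (j5.const_mul 2).add i6
  have i4 : Integrable (fun U : UG N => 2 * mon a a a k l U + (2 * mon a a k a l U +
      (mon a k a k l U + (2 * mon a k k k l U +
        (mon k a k a l U + 2 * mon k a k k l U))))) μ := (j4.const_mul 2).add i5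
  have i3 : Integrable (fun U : UG N => 4 * mon a a k k l U + (2 * mon a a a k l U +
      (2 * mon a a k a l U + (mon a k a k l U + (2 * mon a k k k l U +
        (mon k a k a l U + 2 * mon k a k k l U)))))) μ := (j3.const_mul 4).add i4
  have i2 : Integrable (fun U : UG N => mon k k k k l U + (4 * mon a a k k l U +
      (2 * mon a a a k l U + (2 * mon a a k a l U + (mon a k a k l U +
        (2 * mon a k k k l U + (mon k a k a l U + 2 * mon k a k k l U))))))) μ := j2.add i3
  simp only [hexp] at h
  rw [integral_const_mul, integral_add j1 i2, integral_add j2 i3,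
    integral_add (j3.const_mul 4) i4, integral_add (j4.const_mul 2) i5,
    integral_add (j5.const_mul 2) i6, integral_add j6 i7,
    integral_add (j7.const_mul 2) i8, integral_add j8 (j9.const_mul 2)] at h
  simp only [integral_const_mul] at h
  rw [v_aaak μ hleft l a k hak, v_aaka μ hleft l a k hak, v_akak μ hleft l a k hak,
    v_akkk μ hleft l a k hak, v_kaka μ hleft l a k hak, v_kakk μ hleft l a k hak] at h
  linear_combination -h

lemma rot4_k (hleft : ∀ V : UG N, MeasurePreserving (fun U => V * U) μ μ) (l a k : Fin N)
    (hak : a ≠ k) :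
    ∫ U, mon k k k k l U ∂μ = (1/4 : ℂ) * (∫ U, mon a a a a l U ∂μ +
      (∫ U, mon k k k k l U ∂μ + 4 * ∫ U, mon a a k k l U ∂μ)) := by
  have h := int_left μ hleft (Rot a k hak) (mon k k k k l)
  have hexp : ∀ U : UG N, mon k k k k l (Rot a k hak * U) =
      (1/4 : ℂ) * (mon a a a a l U + (mon k k k k l U + (4 * mon a a k k l U +
        ((-2) * mon a a a k l U + ((-2) * mon a a k a l U + (mon a k a k l U +
        ((-2) * mon a k k k l U + (mon k a k a l U + (-2) * mon k a k k l U)))))))) := by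
    intro U
    unfold mon
    rw [Rot_entry_k a k hak U l]
    simp only [_root_.map_mul, map_sub, hcr]
    set A := (U : Matrix (Fin N) (Fin N) ℂ) a l with hA
    set K := (U : Matrix (Fin N) (Fin N) ℂ) k l with hK
    linear_combination ((r * r + 1/2) * ((K - A) * ((starRingEnd ℂ) K - (starRingEnd ℂ) A) *
      (K - A) * ((starRingEnd ℂ) K - (starRingEnd ℂ) A))) * hr2
  have j1 := integrable_mon μ a a a a l
  have j2 := integrable_mon μ k k k k l
  have j3 := integrable_mon μ a a k k l
  have j4 := integrable_mon μ a a a k l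
  have j5 := integrable_mon μ a a k a l
  have j6 := integrable_mon μ a k a k l
  have j7 := integrable_mon μ a k k k l
  have j8 := integrable_mon μ k a k a l
  have j9 := integrable_mon μ k a k k l
  have i8 : Integrable (fun U : UG N => mon k a k a l U + (-2) * mon k a k k l U) μ :=
    j8.add (j9.const_mul (-2))
  have i7 : Integrable (fun U : UG N => (-2) * mon a k k k l U +
      (mon k a k a l U + (-2) * mon k a k k l U)) μ := (j7.const_mul (-2)).add i8
  have i6 : Integrable (fun U : UG N => mon a k a k l U + ((-2) * mon a k k k l U +
      (mon k a k a l U + (-2) * mon k a k k l U))) μ := j6.add i7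
  have i5 : Integrable (fun U : UG N => (-2) * mon a a k a l U + (mon a k a k l U +
      ((-2) * mon a k k k l U + (mon k a k a l U + (-2) * mon k a k k l U)))) μ :=
    (j5.const_mul (-2)).add i6
  have i4 : Integrable (fun U : UG N => (-2) * mon a a a k l U + ((-2) * mon a a k a l U +
      (mon a k a k l U + ((-2) * mon a k k k l U +
        (mon k a k a l U + (-2) * mon k a k k l U))))) μ := (j4.const_mul (-2)).add i5
  have i3 : Integrable (fun U : UG N => 4 * mon a a k k l U + ((-2) * mon a a a k l U +
      ((-2) * mon a a k a l U + (mon a k a k l U + ((-2) * mon a k k k l U +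
        (mon k a k a l U + (-2) * mon k a k k l U))))))  μ := (j3.const_mul 4).add i4
  have i2 : Integrable (fun U : UG N => mon k k k k l U + (4 * mon a a k k l U +
      ((-2) * mon a a a k l U + ((-2) * mon a a k a l U + (mon a k a k l U +
        ((-2) * mon a k k k l U + (mon k a k a l U + (-2) * mon k a k k l U))))))) μ := j2.add i3
  simp only [hexp] at h
  rw [integral_const_mul, integral_add j1 i2, integral_add j2 i3,
    integral_add (j3.const_mul 4) i4, integral_add (j4.const_mul (-2)) i5,
    integral_add (j5.const_mul (-2)) i6, integral_add j6 i7,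
    integral_add (j7.const_mul (-2)) i8, integral_add j8 (j9.const_mul (-2))] at h
  simp only [integral_const_mul] at h
  rw [v_aaak μ hleft l a k hak, v_aaka μ hleft l a k hak, v_akak μ hleft l a k hak,
    v_akkk μ hleft l a k hak, v_kaka μ hleft l a k hak, v_kakk μ hleft l a k hak] at h
  linear_combination -h

lemma D_eq (hleft : ∀ V : UG N, MeasurePreserving (fun U => V * U) μ μ) (l a k : Fin N)
    (hak : a ≠ k) : ∫ U, mon a a a a l U ∂μ = ∫ U, mon k k k k l U ∂μ := by
  linear_combination rot4_a μ hleft l a k hak - rot4_k μ hleft l a k hak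

lemma P_half (hleft : ∀ V : UG N, MeasurePreserving (fun U => V * U) μ μ) (l a k : Fin N)
    (hak : a ≠ k) :
    ∫ U, mon a a k k l U ∂μ = (1/2 : ℂ) * ∫ U, mon a a a a l U ∂μ := by
  linear_combination (1/4 : ℂ) * D_eq μ hleft l a k hak - rot4_a μ hleft l a k hak

lemma sum4 (l k : Fin N) :
    ∑ x, ∫ U, mon x x k k l U ∂μ = ∫ U, mon2 k k l U ∂μ := by
  rw [← integral_finset_sum _ (fun x _ => integrable_mon μ x x k k l)]
  have hpt : ∀ U : UG N, ∑ x, mon x x k k l U = mon2 k k l U := by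
    intro U
    have hc : ∑ x, (U : Matrix (Fin N) (Fin N) ℂ) x l *
        (starRingEnd ℂ) ((U : Matrix (Fin N) (Fin N) ℂ) x l) = 1 := by
      rw [← col_sum U l]
      exact Finset.sum_congr rfl fun x _ => mul_comm _ _
    calc ∑ x, mon x x k k l U
        = (∑ x, (U : Matrix (Fin N) (Fin N) ℂ) x l *
            (starRingEnd ℂ) ((U : Matrix (Fin N) (Fin N) ℂ) x l)) * mon2 k k l U := by
          rw [Finset.sum_mul]
          exact Finset.sum_congr rfl fun x _ => by unfold mon mon2; ring
      _ = mon2 k k l U := by rw [hc, one_mul]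
  simp only [hpt]

lemma D_val (hleft : ∀ V : UG N, MeasurePreserving (fun U => V * U) μ μ)
    (hN : 0 < N) (l k : Fin N) :
    ∫ U, mon k k k k l U ∂μ = 2 / ((N : ℂ) * ((N : ℂ) + 1)) := by
  have hN0 : (N : ℂ) ≠ 0 := Nat.cast_ne_zero.mpr hN.ne'
  have hN1 : (N : ℂ) + 1 ≠ 0 := Nat.cast_add_one_ne_zero N
  rcases eq_or_lt_of_le (show 1 ≤ N from hN) with h1 | h1
  · -- N = 1
    have hNe : N = 1 := h1.symm
    subst hNe
    have hpt : ∀ U : UG 1, mon k k k k l U = 1 := by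
      intro U
      have hc := col_sum U l
      rw [Finset.sum_eq_single_of_mem k (Finset.mem_univ k)
        (fun b _ hb => absurd (Subsingleton.elim b k) hb)] at hc
      calc mon k k k k l U
          = ((starRingEnd ℂ) ((U : Matrix (Fin 1) (Fin 1) ℂ) k l) *
              (U : Matrix (Fin 1) (Fin 1) ℂ) k l) *
            ((starRingEnd ℂ) ((U : Matrix (Fin 1) (Fin 1) ℂ) k l) *
              (U : Matrix (Fin 1) (Fin 1) ℂ) k l) := by unfold mon; ring
        _ = 1 := by rw [hc, one_mul]
    simp only [hpt]
    simp
    norm_num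
  · -- N ≥ 2
    have : Nontrivial (Fin N) := Fin.nontrivial_iff_two_le.mpr h1
    have h := sum4 μ l k
    rw [S_val μ hleft hN0 l k] at h
    have hsum : ∑ x, ∫ U, mon x x k k l U ∂μ =
        ∑ x : Fin N, ((1/2 : ℂ) * ∫ U, mon k k k k l U ∂μ +
          if x = k then (1/2 : ℂ) * ∫ U, mon k k k k l U ∂μ else 0) := by
      refine Finset.sum_congr rfl fun x _ => ?_
      rcases eq_or_ne x k with rfl | hxk
      · rw [if_pos rfl]; ring
      · rw [if_neg hxk, add_zero, P_half μ hleft l x k hxk, D_eq μ hleft l x k hxk]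
    rw [hsum, Finset.sum_add_distrib, Finset.sum_const, Finset.card_univ, Fintype.card_fin,
      Finset.sum_ite_eq' Finset.univ k, if_pos (Finset.mem_univ k)] at h
    field_simp at h ⊢
    linear_combination h

lemma P_val (hleft : ∀ V : UG N, MeasurePreserving (fun U => V * U) μ μ)
    (hN : 0 < N) (l a k : Fin N) (hak : a ≠ k) :
    ∫ U, mon a a k k l U ∂μ = 1 / ((N : ℂ) * ((N : ℂ) + 1)) := by
  rw [P_half μ hleft l a k hak, D_val μ hleft hN l a]
  ring

end Stmt8Aux3

/-- For the normalized Haar measure on `U(N)` and fixed indices `a, b, j, k, l`,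
`∫_{U(N)} u_{al} ū_{jl} u_{kl} ū_{bl} dU = (δ_{aj}δ_{kb} + δ_{ab}δ_{kj}) / (N(N+1))`. -/
theorem stmt_8 (N : ℕ) (hN : 0 < N)
    [MeasurableSpace (Matrix.unitaryGroup (Fin N) ℂ)]
    [BorelSpace (Matrix.unitaryGroup (Fin N) ℂ)]
    (μ : Measure (Matrix.unitaryGroup (Fin N) ℂ))
    [IsProbabilityMeasure μ]
    (hleft : ∀ V : Matrix.unitaryGroup (Fin N) ℂ,
      MeasurePreserving (fun U => V * U) μ μ)
    (hright : ∀ V : Matrix.unitaryGroup (Fin N) ℂ,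
      MeasurePreserving (fun U => U * V) μ μ)
    (a b j k l : Fin N) :
    (∫ U : Matrix.unitaryGroup (Fin N) ℂ,
        (U : Matrix (Fin N) (Fin N) ℂ) a l *
          (starRingEnd ℂ) ((U : Matrix (Fin N) (Fin N) ℂ) j l) *
          (U : Matrix (Fin N) (Fin N) ℂ) k l *
          (starRingEnd ℂ) ((U : Matrix (Fin N) (Fin N) ℂ) b l) ∂μ)
      = ((if a = j then 1 else 0) * (if k = b then 1 else 0) +
          (if a = b then 1 else 0) * (if k = j then 1 else 0)) /
          ((N : ℂ) * ((N : ℂ) + 1)) := by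
  classical
  open Stmt8Aux Stmt8Aux2 Stmt8Aux3 in
  show (∫ U, Stmt8Aux.mon a j k b l U ∂μ) = _
  by_cases haj : a = j
  · subst haj
    by_cases hkb : k = b
    · subst hkb
      by_cases hak : a = k
      · subst hak
        rw [Stmt8Aux3.D_val μ hleft hN l a]
        simp
        norm_num
      · rw [Stmt8Aux3.P_val μ hleft hN l a k hak]
        simp [hak, fun h : k = a => hak h.symm]
    · have hz := Stmt8Aux.phase_zero μ hleft a a k b l k (by
        have hbk : ¬b = k := fun h => hkb h.symm
        by_cases hak : a = k <;>
          simp [hak, hbk, Complex.conj_I, Complex.ext_iff] <;> norm_num)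
      rw [hz, if_neg hkb]
      by_cases hab : a = b
      · have hka : ¬k = a := fun h => hkb (h.trans hab)
        simp [hab, hka, hkb]
      · simp [hab]
  · by_cases hab : a = b
    · subst hab
      by_cases hkj : k = j
      · subst hkj
        have hswap : Stmt8Aux.mon a k k a l = Stmt8Aux.mon a a k k l :=
          funext fun U => by unfold Stmt8Aux.mon; ring
        rw [hswap, Stmt8Aux3.P_val μ hleft hN l a k haj]
        simp [haj]
      · have hja : ¬j = a := fun h => haj h.symm
        have hz := Stmt8Aux.phase_zero μ hleft a j k a l j (by
          simp [haj, hkj, Complex.conj_I, Complex.ext_iff] <;> norm_num)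
        rw [hz, if_neg haj, if_neg hkj]
        simp
    · have hja : ¬j = a := fun h => haj h.symm
      have hba : ¬b = a := fun h => hab h.symm
      have hz := Stmt8Aux.phase_zero μ hleft a j k b l a (by
        by_cases hka : k = a <;>
          simp [hja, hba, hka, Complex.conj_I, Complex.ext_iff] <;> norm_num)
      rw [hz, if_neg haj, if_neg hab]
      simp
end

section
/- A ℂ^{N×N}-valued function φ on the set of normal N×N matrices is U-invariant (i.e., φ(UZU*) = Uφ(Z)U* for all unitary U and normal Z) if and only if there exists a function f(d_1; d_2, …, d_N): ℂ × ℂ^{N−1} → ℂ, symmetric in its last N−1 variables, such that φ(UDU*) = U·diag_j(f(d_j; d_1,…,d̂_j,…,d_N))·U* for all unitary U and diagonal D = diag(d_1,…,d_N); moreover f is uniquely determined by φ. -/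
open Matrix

lemma diag_of_eigenbasis {N : ℕ} (Z : Matrix (Fin N) (Fin N) ℂ)
    (b : OrthonormalBasis (Fin N) ℂ (EuclideanSpace ℂ (Fin N))) (μ : Fin N → ℂ)
    (hb : ∀ j, Z *ᵥ ⇑(b j) = μ j • ⇑(b j)) :
    ∃ U : Matrix.unitaryGroup (Fin N) ℂ,
      Z = (U : Matrix (Fin N) (Fin N) ℂ) * diagonal μ * (U : Matrix (Fin N) (Fin N) ℂ)ᴴ := by
  set V : Matrix (Fin N) (Fin N) ℂ :=
    (EuclideanSpace.basisFun (Fin N) ℂ).toBasis.toMatrix ⇑b with hV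
  have hVmem : V ∈ Matrix.unitaryGroup (Fin N) ℂ :=
    (EuclideanSpace.basisFun (Fin N) ℂ).toMatrix_orthonormalBasis_mem_unitary b
  have hVapp : ∀ i j, V i j = b j i := fun i j => rfl
  have hVmul : ∀ j, V *ᵥ Pi.single j 1 = ⇑(b j) := by
    intro j; funext i
    simp only [mulVec_single_one]
    exact hVapp i j
  have hVstar : ∀ j, Vᴴ *ᵥ ⇑(b j) = Pi.single j 1 := by
    intro j
    rw [← hVmul, mulVec_mulVec,
      (EuclideanSpace.basisFun (Fin N) ℂ).toMatrix_orthonormalBasis_conjTranspose_mul_self b,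
      one_mulVec]
  have key : Vᴴ * Z * V = diagonal μ := by
    apply Matrix.toEuclideanLin.injective
    apply Module.Basis.ext (EuclideanSpace.basisFun (Fin N) ℂ).toBasis
    intro i
    simp only [toEuclideanLin_apply, OrthonormalBasis.coe_toBasis, EuclideanSpace.basisFun_apply,
      EuclideanSpace.ofLp_single, ← mulVec_mulVec, hVmul, hb, Matrix.diagonal_mulVec_single,
      mulVec_smul, hVstar, mul_one]
    apply PiLp.ext
    intro j
    simp only [PiLp.smul_apply, PiLp.toLp_apply, Pi.smul_apply, Pi.single_apply, EuclideanSpace.single_apply, smul_eq_mul, mul_ite, mul_one,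
      mul_zero]
  refine ⟨⟨V, hVmem⟩, ?_⟩
  have h1 : V * Vᴴ = 1 := (EuclideanSpace.basisFun (Fin N) ℂ).toMatrix_orthonormalBasis_self_mul_conjTranspose b
  calc Z = (V * Vᴴ) * Z * (V * Vᴴ) := by rw [h1, one_mul, mul_one]
  _ = V * (Vᴴ * Z * V) * Vᴴ := by noncomm_ring
  _ = V * diagonal μ * Vᴴ := by rw [key]

set_option maxHeartbeats 1000000 in
open Module.End in
lemma normal_spectral {N : ℕ} (Z : Matrix (Fin N) (Fin N) ℂ) (h : Zᴴ * Z = Z * Zᴴ) :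
    ∃ (U : Matrix.unitaryGroup (Fin N) ℂ) (d : Fin N → ℂ),
      Z = (U : Matrix (Fin N) (Fin N) ℂ) * diagonal d * (U : Matrix (Fin N) (Fin N) ℂ)ᴴ := by
  classical
  obtain ⟨A, hA⟩ : ∃ A : Matrix (Fin N) (Fin N) ℂ, A = (2⁻¹ : ℂ) • (Z + Zᴴ) := ⟨_, rfl⟩
  obtain ⟨B, hB⟩ : ∃ B : Matrix (Fin N) (Fin N) ℂ, B = (-Complex.I * 2⁻¹) • (Z - Zᴴ) := ⟨_, rfl⟩
  have hAh : A.IsHermitian := by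
    rw [Matrix.IsHermitian, hA, Matrix.conjTranspose_smul, Matrix.conjTranspose_add,
      Matrix.conjTranspose_conjTranspose,
      show (star (2⁻¹:ℂ)) = 2⁻¹ by norm_num, add_comm]
  have hBh : B.IsHermitian := by
    rw [Matrix.IsHermitian, hB, Matrix.conjTranspose_smul, Matrix.conjTranspose_sub,
      Matrix.conjTranspose_conjTranspose,
      show (star (-Complex.I * 2⁻¹ : ℂ)) = Complex.I * 2⁻¹ by simp,
      show (Complex.I * 2⁻¹) • (Zᴴ - Z) = (-Complex.I * 2⁻¹) • (Z - Zᴴ) by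
        rw [neg_mul, neg_smul, ← smul_neg, neg_sub]]
  have hZAB : Z = A + Complex.I • B := by
    rw [hA, hB, smul_smul,
      show Complex.I * (-Complex.I * 2⁻¹) = 2⁻¹ by
        rw [← mul_assoc, mul_neg, Complex.I_mul_I]; ring]
    module
  have hABcomm : A * B = B * A := by
    rw [hA, hB, smul_mul_assoc, mul_smul_comm, smul_mul_assoc, mul_smul_comm, smul_smul, smul_smul,
      mul_comm ((2:ℂ)⁻¹)]
    congr 1
    simp only [mul_add, add_mul, mul_sub, sub_mul, h]
    abel
  have hAs : (Matrix.toEuclideanLin A).IsSymmetric := Matrix.isHermitian_iff_isSymmetric.mp hAh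
  have hBs : (Matrix.toEuclideanLin B).IsSymmetric := Matrix.isHermitian_iff_isSymmetric.mp hBh
  have hmul : ∀ M M' : Matrix (Fin N) (Fin N) ℂ,
      Matrix.toEuclideanLin (M * M') = (Matrix.toEuclideanLin M) * (Matrix.toEuclideanLin M') := by
    intro M M'
    simp only [Matrix.toEuclideanLin_eq_toLin]
    rw [Matrix.toLin_mul (PiLp.basisFun 2 ℂ (Fin N)) (PiLp.basisFun 2 ℂ (Fin N))
      (PiLp.basisFun 2 ℂ (Fin N))]
    rfl
  have hcomm : Commute (Matrix.toEuclideanLin A) (Matrix.toEuclideanLin B) := by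
    rw [Commute, SemiconjBy, ← hmul, ← hmul, hABcomm]
  have internal := LinearMap.IsSymmetric.directSum_isInternal_of_commute hAs hBs hcomm
  have hOF := LinearMap.IsSymmetric.orthogonalFamily_eigenspace_inf_eigenspace hAs hBs
  set W : ℂ × ℂ → Submodule ℂ (EuclideanSpace ℂ (Fin N)) :=
    fun p => eigenspace (Matrix.toEuclideanLin A) p.2 ⊓ eigenspace (Matrix.toEuclideanLin B) p.1
    with hW
  haveI : Fintype {p : ℂ × ℂ // W p ≠ ⊥} :=
    internal.submodule_iSupIndep.fintypeNeBotOfFiniteDimensional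
  have internal' : DirectSum.IsInternal (fun p : {p : ℂ × ℂ // W p ≠ ⊥} => W p.1) :=
    DirectSum.isInternal_ne_bot_iff.mpr internal
  have hOF' := hOF.comp (Subtype.val_injective (p := fun p : ℂ × ℂ => W p ≠ ⊥))
  have hn : Module.finrank ℂ (EuclideanSpace ℂ (Fin N)) = N := by
    simp [finrank_euclideanSpace]
  set bb := internal'.subordinateOrthonormalBasis hn hOF' with hbb
  set idx := fun j => internal'.subordinateOrthonormalBasisIndex hn j hOF' with hidx
  have hmem : ∀ j, bb j ∈ W (idx j).1 := fun j =>
    internal'.subordinateOrthonormalBasis_subordinate hn j hOF'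
  set μ : Fin N → ℂ := fun j => ((idx j).1).2 + Complex.I * ((idx j).1).1 with hμ
  have heig : ∀ j, Matrix.toEuclideanLin Z (bb j) = μ j • bb j := by
    intro j
    have hA' : Matrix.toEuclideanLin A (bb j) = ((idx j).1).2 • bb j :=
      mem_eigenspace_iff.mp (hmem j).1
    have hB' : Matrix.toEuclideanLin B (bb j) = ((idx j).1).1 • bb j :=
      mem_eigenspace_iff.mp (hmem j).2
    rw [hZAB, map_add, LinearEquiv.map_smul, LinearMap.add_apply, LinearMap.smul_apply,
      hA', hB', smul_smul, hμ, add_smul]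
  have hb' : ∀ j, Z *ᵥ ⇑(bb j) = μ j • ⇑(bb j) := by
    intro j
    simpa only [Matrix.toEuclideanLin_apply, WithLp.ofLp_smul] using congr(⇑$(heig j))
  obtain ⟨U, hU⟩ := diag_of_eigenbasis Z bb μ hb'
  exact ⟨U, μ, hU⟩

lemma permMatrix_conjTranspose {N : ℕ} (σ : Equiv.Perm (Fin N)) :
    (σ.permMatrix ℂ)ᴴ = (σ⁻¹).permMatrix ℂ := by
  ext i j
  simp only [Equiv.Perm.permMatrix, Matrix.conjTranspose_apply, PEquiv.toMatrix_apply,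
    Equiv.toPEquiv_apply, Option.mem_def, Option.some.injEq]
  by_cases h : σ j = i
  · rw [if_pos h, if_pos (by rw [← h]; exact (Equiv.symm_apply_apply σ j).symm ▸ rfl)]
    · simp
  · rw [if_neg h, if_neg (fun hc => h ?_)]
    · simp
    · rw [← hc]; simp
lemma permMatrix_mem_unitary {N : ℕ} (σ : Equiv.Perm (Fin N)) :
    σ.permMatrix ℂ ∈ Matrix.unitaryGroup (Fin N) ℂ := by
  rw [Matrix.mem_unitaryGroup_iff']
  rw [Matrix.star_eq_conjTranspose, permMatrix_conjTranspose]
  rw [Equiv.Perm.permMatrix, Equiv.Perm.permMatrix, ← PEquiv.toMatrix_trans,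
    ← Equiv.toPEquiv_trans]
  rw [show σ⁻¹.trans σ = Equiv.refl (Fin N) by ext x; simp, Equiv.toPEquiv_refl,
    PEquiv.toMatrix_refl]

lemma permMatrix_conj {N : ℕ} (σ : Equiv.Perm (Fin N)) (M : Matrix (Fin N) (Fin N) ℂ) :
    (σ.permMatrix ℂ) * M * (σ.permMatrix ℂ)ᴴ = M.submatrix σ σ := by
  rw [permMatrix_conjTranspose, Equiv.Perm.permMatrix, Equiv.Perm.permMatrix, PEquiv.toMatrix_toPEquiv_mul,
    PEquiv.mul_toMatrix_toPEquiv]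
  simp [Matrix.submatrix_submatrix]
  rfl


/-- A `ℂ^{N×N}`-valued function `φ` on the normal `N×N` matrices is `U`-invariant
(`φ(UZU*) = Uφ(Z)U*` for all unitary `U` and normal `Z`) if and only if there is a
unique function `f(d_1; d_2, …, d_N)` on `ℂ × ℂ^{N-1}`, symmetric in its last
`N−1` variables, with
`φ(UDU*) = U diag_j(f(d_j; d_1,…,d̂_j,…,d_N)) U*` for all unitary `U` and diagonal
`D = diag(d)`.  Here `f` is encoded as a function on `Fin N → ℂ` (the first slot
being the distinguished variable), symmetry in the last `N−1` variables being
invariance under all permutations fixing `0`, and the argument list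
`(d_j; d_1,…,d̂_j,…,d_N)` is `d ∘ (swap 0 j)`. -/
theorem stmt_13 (N : ℕ) [NeZero N]
    (φ : Matrix (Fin N) (Fin N) ℂ → Matrix (Fin N) (Fin N) ℂ) :
    (∀ (U : Matrix.unitaryGroup (Fin N) ℂ) (Z : Matrix (Fin N) (Fin N) ℂ),
        Zᴴ * Z = Z * Zᴴ →
        φ ((U : Matrix (Fin N) (Fin N) ℂ) * Z * (U : Matrix (Fin N) (Fin N) ℂ)ᴴ)
          = (U : Matrix (Fin N) (Fin N) ℂ) * φ Z * (U : Matrix (Fin N) (Fin N) ℂ)ᴴ)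
    ↔ (∃! f : (Fin N → ℂ) → ℂ,
        (∀ σ : Equiv.Perm (Fin N), σ 0 = 0 → ∀ d : Fin N → ℂ, f (d ∘ σ) = f d) ∧
        ∀ (U : Matrix.unitaryGroup (Fin N) ℂ) (d : Fin N → ℂ),
          φ ((U : Matrix (Fin N) (Fin N) ℂ) * Matrix.diagonal d *
              (U : Matrix (Fin N) (Fin N) ℂ)ᴴ)
            = (U : Matrix (Fin N) (Fin N) ℂ) *
                Matrix.diagonal (fun j => f (d ∘ Equiv.swap (0 : Fin N) j)) *
                (U : Matrix (Fin N) (Fin N) ℂ)ᴴ) := by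
  have hdn : ∀ d : Fin N → ℂ, (diagonal d)ᴴ * diagonal d = diagonal d * (diagonal d)ᴴ := by
    intro d
    simp [Matrix.diagonal_conjTranspose, Matrix.diagonal_mul_diagonal, mul_comm]
  constructor
  · intro hφ
    have hperm : ∀ (σ : Equiv.Perm (Fin N)) (d : Fin N → ℂ),
        φ (diagonal (d ∘ σ)) = (φ (diagonal d)).submatrix σ σ := by
      intro σ d
      have h1 : φ ((σ.permMatrix ℂ) * diagonal d * (σ.permMatrix ℂ)ᴴ)
          = (σ.permMatrix ℂ) * φ (diagonal d) * (σ.permMatrix ℂ)ᴴ :=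
        hφ ⟨σ.permMatrix ℂ, permMatrix_mem_unitary σ⟩ (diagonal d) (hdn d)
      rw [permMatrix_conj, permMatrix_conj, Matrix.submatrix_diagonal_equiv] at h1
      exact h1
    have hoff : ∀ (d : Fin N → ℂ) (i j : Fin N), i ≠ j → φ (diagonal d) i j = 0 := by
      intro d i j hij
      set w : Fin N → ℂ := fun k => if k = j then (-1 : ℂ) else 1 with hw
      have hwmem : diagonal w ∈ Matrix.unitaryGroup (Fin N) ℂ := by
        rw [Matrix.mem_unitaryGroup_iff', Matrix.star_eq_conjTranspose,
          Matrix.diagonal_conjTranspose, Matrix.diagonal_mul_diagonal]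
        ext k l
        simp only [Matrix.diagonal_apply, Matrix.one_apply, Pi.star_apply, hw]
        by_cases hkl : k = l
        · subst hkl
          by_cases hkj : k = j <;> simp [hkj]
        · simp [hkl]
      have h2 : (diagonal w) * diagonal d * (diagonal w)ᴴ = diagonal d := by
        rw [Matrix.diagonal_conjTranspose, Matrix.diagonal_mul_diagonal,
          Matrix.diagonal_mul_diagonal]
        ext k l
        simp only [Matrix.diagonal_apply, Pi.star_apply, hw]
        by_cases hkl : k = l
        · subst hkl
          by_cases hkj : k = j <;> simp [hkj]
        · simp [hkl]
      have h1 : φ (diagonal d) = (diagonal w) * φ (diagonal d) * (diagonal w)ᴴ := by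
        conv_lhs => rw [← h2]
        exact hφ ⟨diagonal w, hwmem⟩ (diagonal d) (hdn d)
      have h3 := congrArg (fun M : Matrix (Fin N) (Fin N) ℂ => M i j) h1
      simp only [Matrix.diagonal_conjTranspose, Matrix.mul_diagonal, Matrix.diagonal_mul,
        Pi.star_apply, hw, if_neg hij, if_pos rfl] at h3
      norm_num at h3
      linear_combination h3 / 2
    have hdiag : ∀ d : Fin N → ℂ, φ (diagonal d)
        = diagonal (fun j => φ (diagonal (d ∘ Equiv.swap (0 : Fin N) j)) 0 0) := by
      intro d
      ext i j
      by_cases hij : i = j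
      · subst hij
        rw [Matrix.diagonal_apply_eq]
        rw [hperm (Equiv.swap (0 : Fin N) i) d]
        simp [Matrix.submatrix_apply, Equiv.swap_apply_left]
      · rw [Matrix.diagonal_apply_ne _ hij]
        exact hoff d i j hij
    refine ⟨fun d => φ (diagonal d) 0 0, ⟨?_, ?_⟩, ?_⟩
    · intro σ hσ0 d
      show φ (diagonal (d ∘ σ)) 0 0 = φ (diagonal d) 0 0
      rw [hperm σ d]
      simp [Matrix.submatrix_apply, hσ0]
    · intro U d
      rw [hφ U (diagonal d) (hdn d), ← hdiag d]
    · intro g ⟨hgsym, hg⟩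
      funext d
      have h1 := hg 1 d
      rw [show ((1 : Matrix.unitaryGroup (Fin N) ℂ) : Matrix (Fin N) (Fin N) ℂ) = 1 from rfl,
        Matrix.conjTranspose_one, one_mul, mul_one, one_mul, mul_one] at h1
      show g d = φ (diagonal d) 0 0
      rw [h1, Matrix.diagonal_apply_eq]
      congr 1
      rw [Equiv.swap_self]
      simp
  · rintro ⟨f, ⟨hsym, hf⟩, -⟩ U Z hZ
    obtain ⟨V, d, hVd⟩ := normal_spectral Z hZ
    have hUV : ((U * V : Matrix.unitaryGroup (Fin N) ℂ) : Matrix (Fin N) (Fin N) ℂ)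
        = (U : Matrix (Fin N) (Fin N) ℂ) * (V : Matrix (Fin N) (Fin N) ℂ) := rfl
    have hstep : (U : Matrix (Fin N) (Fin N) ℂ) * Z * (U : Matrix (Fin N) (Fin N) ℂ)ᴴ
        = ((U * V : Matrix.unitaryGroup (Fin N) ℂ) : Matrix (Fin N) (Fin N) ℂ) * diagonal d *
          ((U * V : Matrix.unitaryGroup (Fin N) ℂ) : Matrix (Fin N) (Fin N) ℂ)ᴴ := by
      rw [hVd, hUV, Matrix.conjTranspose_mul]
      noncomm_ring
    rw [hstep, hf (U * V) d, hUV, Matrix.conjTranspose_mul, hVd, hf V d]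
    noncomm_ring
end

section
/- Let μ_h denote the measure on the normal N×N matrices defined by ∫ f dμ_h = (πh)^{-N} ∫_{U(N)} ∫_{ℂ^N} f(U*DU) e^{-‖D‖²/h} dU dD. Then ∫ Z^{*j} Z^k dμ_h(Z) = δ_{jk} k! h^k I. -/
open MeasureTheory Matrix
open Real Set

lemma pow_div_factorial_le_exp (m : ℕ) {x : ℝ} (hx : 0 ≤ x) :
    x ^ m ≤ m.factorial * Real.exp x := by
  have h1 : x ^ m / m.factorial ≤ Real.exp x := by
    refine le_trans ?_ (Real.sum_le_exp_of_nonneg hx (m+1))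
    exact Finset.single_le_sum (f := fun i => x ^ i / i.factorial)
      (fun i _ => by positivity) (Finset.self_mem_range_succ m)
  have hm : (0:ℝ) < m.factorial := by positivity
  calc x ^ m = m.factorial * (x ^ m / m.factorial) := by field_simp
  _ ≤ m.factorial * Real.exp x := mul_le_mul_of_nonneg_left h1 hm.le

lemma pow_mul_exp_bound (m : ℕ) {h t : ℝ} (hh : 0 < h) (ht : 0 ≤ t) :
    t ^ m * Real.exp (-t ^ 2 / h) ≤
      (1 + m.factorial * (2 * h) ^ m) * Real.exp (-t ^ 2 / (2 * h)) := by
  set x : ℝ := t ^ 2 / (2 * h) with hxdef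
  have hx : 0 ≤ x := by positivity
  have h2m : t ^ (2 * m) ≤ m.factorial * (2 * h) ^ m * Real.exp x := by
    have : t ^ (2 * m) = (x * (2 * h)) ^ m := by
      rw [hxdef]; rw [div_mul_cancel₀]; rw [pow_mul]; positivity
    rw [this, mul_pow]
    calc x ^ m * (2 * h) ^ m ≤ m.factorial * Real.exp x * (2 * h) ^ m :=
      mul_le_mul_of_nonneg_right (pow_div_factorial_le_exp m hx) (by positivity)
    _ = m.factorial * (2 * h) ^ m * Real.exp x := by ring
  have hm1 : t ^ m ≤ 1 + t ^ (2 * m) := by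
    rcases le_total t 1 with h1 | h1
    · have := pow_le_one₀ ht h1 (n := m)
      nlinarith [pow_nonneg ht (2*m)]
    · have := pow_le_pow_right₀ h1 (Nat.le_mul_of_pos_left m (by norm_num) : m ≤ 2 * m)
      nlinarith
  have hE : (1:ℝ) ≤ Real.exp x := Real.one_le_exp hx
  have key : t ^ m ≤ (1 + m.factorial * (2 * h) ^ m) * Real.exp x := by
    have : t ^ m ≤ 1 + m.factorial * (2 * h) ^ m * Real.exp x := le_trans hm1 (by linarith)
    calc t ^ m ≤ 1 + m.factorial * (2 * h) ^ m * Real.exp x := this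
    _ ≤ Real.exp x + m.factorial * (2 * h) ^ m * Real.exp x := by linarith
    _ = (1 + m.factorial * (2 * h) ^ m) * Real.exp x := by ring
  have hpos : 0 < Real.exp (-t ^ 2 / h) := Real.exp_pos _
  calc t ^ m * Real.exp (-t ^ 2 / h)
      ≤ ((1 + m.factorial * (2 * h) ^ m) * Real.exp x) * Real.exp (-t ^ 2 / h) :=
        mul_le_mul_of_nonneg_right key hpos.le
  _ = (1 + m.factorial * (2 * h) ^ m) * (Real.exp x * Real.exp (-t ^ 2 / h)) := by ring
  _ = (1 + m.factorial * (2 * h) ^ m) * Real.exp (-t ^ 2 / (2 * h)) := by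
      rw [← Real.exp_add]
      congr 1
      rw [hxdef]; field_simp; ring

lemma gauss_integrable {h : ℝ} (hh : 0 < h) :
    Integrable (fun z : ℂ => Real.exp (-Complex.normSq z / h)) := by
  have hb : (0:ℝ) < (1/h) := by positivity
  have h1 := (GaussianFourier.integrable_cexp_neg_mul_sq_norm_add
    (V := ℂ) (b := ((1/h : ℝ) : ℂ)) (by simpa using hb) 0 0).norm
  refine h1.congr (Filter.Eventually.of_forall fun z => ?_)
  show ‖Complex.exp _‖ = _
  have e1 : (-((1/h : ℝ) : ℂ) * (‖z‖ : ℂ) ^ 2 + 0 * ((inner ℝ (0:ℂ) z : ℝ) : ℂ))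
      = ((-(1/h) * ‖z‖ ^ 2 : ℝ) : ℂ) := by push_cast; ring
  rw [e1, ← Complex.ofReal_exp, Complex.norm_real, Real.norm_eq_abs,
    abs_of_pos (Real.exp_pos _)]
  congr 1
  have e2 : Complex.normSq z = ‖z‖ ^ 2 := by
    rw [Complex.normSq_eq_norm_sq]
  rw [e2]; field_simp

lemma moment_integrable {h : ℝ} (hh : 0 < h) (j k : ℕ) :
    Integrable (fun z : ℂ =>
      (starRingEnd ℂ z) ^ j * z ^ k * (Real.exp (-Complex.normSq z / h) : ℂ)) := by
  have hg : Integrable (fun z : ℂ =>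
      (1 + ((j+k).factorial : ℝ) * (2*h)^(j+k)) * Real.exp (-Complex.normSq z / (2*h))) :=
    (gauss_integrable (by positivity)).const_mul _
  refine hg.mono' ?_ (Filter.Eventually.of_forall fun z => ?_)
  · apply Continuous.aestronglyMeasurable
    exact ((Complex.continuous_conj.pow j).mul (continuous_pow k)).mul
      (Complex.continuous_ofReal.comp (Real.continuous_exp.comp
        ((Complex.continuous_normSq.neg).div_const h)))
  · have hnn : ‖(starRingEnd ℂ z) ^ j * z ^ k * (Real.exp (-Complex.normSq z / h) : ℂ)‖
        = ‖z‖ ^ (j + k) * Real.exp (-Complex.normSq z / h) := by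
      rw [norm_mul, norm_mul, norm_pow, norm_pow, RCLike.norm_conj, Complex.norm_real,
        Real.norm_eq_abs, abs_of_pos (Real.exp_pos _), pow_add]
    rw [hnn]
    have hb2 := pow_mul_exp_bound (j + k) hh (norm_nonneg z)
    have e2 : Complex.normSq z = ‖z‖ ^ 2 := by
      rw [Complex.normSq_eq_norm_sq]
    rw [e2]
    exact hb2

lemma oneD (h : ℝ) (hh : 0 < h) (j k : ℕ) :
    ∫ z : ℂ, (starRingEnd ℂ z) ^ j * z ^ k * (Real.exp (-Complex.normSq z / h) : ℂ)
      = if j = k then ((Real.pi : ℂ) * h) * (k.factorial : ℂ) * (h : ℂ) ^ k else 0 := by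
  rw [← Complex.integral_comp_polarCoord_symm, polarCoord_target]
  have hint : EqOn
      (fun p : ℝ × ℝ => p.1 • ((starRingEnd ℂ (Complex.polarCoord.symm p)) ^ j *
        (Complex.polarCoord.symm p) ^ k *
        (Real.exp (-Complex.normSq (Complex.polarCoord.symm p) / h) : ℂ)))
      (fun p : ℝ × ℝ => ((p.1 ^ (j + k + 1) * Real.exp (-p.1 ^ 2 / h) : ℝ) : ℂ) *
        Complex.exp ((((k : ℤ) - (j : ℤ)) : ℂ) * Complex.I * (p.2 : ℂ)))
      (Set.Ioi (0:ℝ) ×ˢ Set.Ioo (-Real.pi) Real.pi) := by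
    rintro ⟨r, θ⟩ ⟨hr, hθ⟩
    simp only
    have hz : Complex.polarCoord.symm (r, θ) = (r : ℂ) * Complex.exp (θ * Complex.I) := by
      rw [Complex.polarCoord_symm_apply, Complex.exp_mul_I, Complex.ofReal_cos,
        Complex.ofReal_sin]
    have hconj : (starRingEnd ℂ) (Complex.polarCoord.symm (r, θ))
        = (r : ℂ) * Complex.exp (-θ * Complex.I) := by
      rw [hz, _root_.map_mul, Complex.conj_ofReal, ← Complex.exp_conj, _root_.map_mul,
        Complex.conj_ofReal, Complex.conj_I]
      ring_nf
    have habs : Complex.normSq (Complex.polarCoord.symm (r, θ)) = r ^ 2 := by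
      rw [hz, Complex.normSq_mul, Complex.normSq_ofReal]
      have h1 : Complex.normSq (Complex.exp (θ * Complex.I)) = 1 := by
        rw [Complex.normSq_eq_norm_sq, Complex.norm_exp]
        simp
      rw [h1]; ring
    have E : Complex.exp (-θ * Complex.I) ^ j * Complex.exp (θ * Complex.I) ^ k
        = Complex.exp ((((k : ℤ) - (j : ℤ)) : ℂ) * Complex.I * (θ : ℂ)) := by
      rw [← Complex.exp_nat_mul, ← Complex.exp_nat_mul, ← Complex.exp_add]
      congr 1
      push_cast
      ring
    rw [Complex.real_smul, hconj, habs, hz, mul_pow, mul_pow, ← E]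
    push_cast
    ring
  rw [setIntegral_congr_fun (measurableSet_Ioi.prod measurableSet_Ioo) hint,
    Measure.volume_eq_prod,
    setIntegral_prod_mul (f := fun r : ℝ => ((r ^ (j + k + 1) * Real.exp (-r ^ 2 / h) : ℝ) : ℂ))
      (g := fun θ : ℝ => Complex.exp ((((k : ℤ) - (j : ℤ)) : ℂ) * Complex.I * (θ : ℂ)))]
  by_cases hjk : j = k
  · subst hjk
    rw [if_pos rfl]
    have hang : (∫ θ in Set.Ioo (-Real.pi) Real.pi,
        Complex.exp ((((j : ℤ) - (j : ℤ)) : ℂ) * Complex.I * (θ : ℂ)))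
        = ((2 * Real.pi : ℝ) : ℂ) := by
      simp only [sub_self, Int.cast_zero, zero_mul, Complex.exp_zero]
      rw [setIntegral_const, Real.volume_real_Ioo_of_le (by linarith [Real.pi_pos]), sub_neg_eq_add,
        Complex.real_smul, mul_one]
      push_cast
      ring
    have hrad : (∫ r in Set.Ioi (0:ℝ), r ^ (j + j + 1) * Real.exp (-r ^ 2 / h))
        = (j.factorial : ℝ) * h ^ (j + 1) / 2 := by
      have congrI : (∫ r in Set.Ioi (0:ℝ), r ^ (j + j + 1) * Real.exp (-r ^ 2 / h))
          = ∫ r in Set.Ioi (0:ℝ), r ^ (2 * (j:ℝ) + 1) * Real.exp (-(1/h) * r ^ (2:ℝ)) := by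
        refine setIntegral_congr_fun measurableSet_Ioi (fun x hx => ?_) |>.symm
        rw [show (2 * (j:ℝ) + 1) = ((j + j + 1 : ℕ) : ℝ) by push_cast; ring,
          Real.rpow_natCast, show (2:ℝ) = ((2:ℕ):ℝ) by norm_num, Real.rpow_natCast]
        congr 1
        ring
      have key := integral_rpow_mul_exp_neg_mul_rpow (p := 2) (q := 2 * (j:ℝ) + 1)
        (b := 1/h) two_pos (by linarith [Nat.cast_nonneg (α := ℝ) j]) (by positivity)
      rw [congrI, key, show -(2 * (j:ℝ) + 1 + 1) / 2 = -((j:ℝ) + 1) by ring,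
        show (2 * (j:ℝ) + 1 + 1) / 2 = (j:ℝ) + 1 by ring,
        Real.Gamma_nat_eq_factorial, one_div h, Real.inv_rpow hh.le,
        Real.rpow_neg hh.le, inv_inv,
        show ((j:ℝ) + 1) = ((j + 1 : ℕ) : ℝ) by push_cast; ring, Real.rpow_natCast]
      ring
    have hc2 : (∫ x in Set.Ioi (0:ℝ), ((x ^ (j + j + 1) * Real.exp (-x ^ 2 / h) : ℝ) : ℂ))
        = ((∫ x in Set.Ioi (0:ℝ), x ^ (j + j + 1) * Real.exp (-x ^ 2 / h) : ℝ) : ℂ) :=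
      integral_ofReal
    rw [hang, hc2, hrad]
    push_cast
    ring
  · rw [if_neg hjk]
    have hn : ((k : ℤ) - (j : ℤ)) ≠ 0 :=
      sub_ne_zero.mpr (fun hq => hjk (by exact_mod_cast hq.symm))
    have hc : (((k - j : ℤ) : ℂ)) * Complex.I ≠ 0 := by
      apply mul_ne_zero _ Complex.I_ne_zero
      exact_mod_cast hn
    have hang : (∫ θ in Set.Ioo (-Real.pi) Real.pi,
        Complex.exp ((((k : ℤ) - (j : ℤ)) : ℂ) * Complex.I * (θ : ℂ))) = 0 := by
      simp_rw [show ∀ θ : ℝ, ((((k : ℤ) - (j : ℤ)) : ℂ) * Complex.I * (θ : ℂ))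
        = (((k - j : ℤ) : ℂ) * Complex.I) * (θ : ℂ) from fun θ => by push_cast; ring]
      rw [← integral_Ioc_eq_integral_Ioo,
        ← intervalIntegral.integral_of_le (by linarith [Real.pi_pos] : -Real.pi ≤ Real.pi),
        integral_exp_mul_complex hc]
      have e1 : ((k - j : ℤ) : ℂ) * Complex.I * (Real.pi : ℂ)
          = ((k - j : ℤ) : ℂ) * ((Real.pi : ℂ) * Complex.I) := by ring
      have e2 : ((k - j : ℤ) : ℂ) * Complex.I * ((-Real.pi : ℝ) : ℂ)
          = ((k - j : ℤ) : ℂ) * (-((Real.pi : ℂ) * Complex.I)) := by push_cast; ring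
      rw [e1, e2, Complex.exp_int_mul, Complex.exp_int_mul, Complex.exp_neg,
        Complex.exp_pi_mul_I]
      norm_num
    rw [hang, mul_zero]


lemma hsplit_lemma (N : ℕ) (h : ℝ) (j k : ℕ) (i : Fin N) (d : Fin N → ℂ) :
    (starRingEnd ℂ (d i)) ^ j * (d i) ^ k *
      (Real.exp (-(∑ l, Complex.normSq (d l)) / h) : ℂ)
      = ∏ l, ((if l = i then (starRingEnd ℂ (d l)) ^ j * (d l) ^ k else 1) *
          (Real.exp (-Complex.normSq (d l) / h) : ℂ)) := by
  rw [Finset.prod_mul_distrib, Finset.prod_ite_eq' Finset.univ i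
    (fun l => (starRingEnd ℂ (d l)) ^ j * (d l) ^ k), if_pos (Finset.mem_univ i)]
  congr 1
  rw [← Complex.ofReal_prod, ← Real.exp_sum]
  congr 2
  rw [← Finset.sum_div, ← Finset.sum_neg_distrib]

lemma integrable_g (N : ℕ) (h : ℝ) (hh : 0 < h) (j k : ℕ) (i : Fin N) :
    Integrable (fun d : Fin N → ℂ => (starRingEnd ℂ (d i)) ^ j * (d i) ^ k *
      (Real.exp (-(∑ l, Complex.normSq (d l)) / h) : ℂ)) := by
  have he : (fun d : Fin N → ℂ => (starRingEnd ℂ (d i)) ^ j * (d i) ^ k *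
      (Real.exp (-(∑ l, Complex.normSq (d l)) / h) : ℂ))
      = fun d : Fin N → ℂ => ∏ l, (fun l (z : ℂ) =>
          (if l = i then (starRingEnd ℂ z) ^ j * z ^ k else 1) *
          (Real.exp (-Complex.normSq z / h) : ℂ)) l (d l) :=
    funext (hsplit_lemma N h j k i)
  rw [he]
  refine Integrable.fintype_prod (f := fun l (z : ℂ) =>
    (if l = i then (starRingEnd ℂ z) ^ j * z ^ k else 1) *
    (Real.exp (-Complex.normSq z / h) : ℂ)) (fun l => ?_)
  by_cases hl : l = i
  · simpa [hl] using moment_integrable hh j k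
  · simpa [hl] using moment_integrable hh 0 0

lemma prodD (N : ℕ) (h : ℝ) (hh : 0 < h) (j k : ℕ) (i : Fin N) :
    (∫ d : Fin N → ℂ, (starRingEnd ℂ (d i)) ^ j * (d i) ^ k *
      (Real.exp (-(∑ l, Complex.normSq (d l)) / h) : ℂ))
      = (if j = k then ((Real.pi : ℂ) * h) * (k.factorial : ℂ) * (h : ℂ) ^ k else 0) *
        ((Real.pi : ℂ) * h) ^ (N - 1) := by
  simp_rw [hsplit_lemma N h j k i]
  rw [integral_fintype_prod_volume_eq_prod (ι := Fin N)
    (f := fun l z => (if l = i then (starRingEnd ℂ z) ^ j * z ^ k else 1) *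
      (Real.exp (-Complex.normSq z / h) : ℂ))]
  have hval : ∀ l : Fin N, (∫ z : ℂ, (if l = i then (starRingEnd ℂ z) ^ j * z ^ k else 1) *
      (Real.exp (-Complex.normSq z / h) : ℂ))
      = if l = i then (if j = k then ((Real.pi : ℂ) * h) * (k.factorial : ℂ) *
          (h : ℂ) ^ k else 0) else ((Real.pi : ℂ) * h) := by
    intro l
    by_cases hl : l = i
    · simp only [hl, if_pos rfl]
      exact oneD h hh j k
    · simp only [hl, if_false, one_mul]
      have h0 := oneD h hh 0 0
      simpa using h0
  rw [Finset.prod_congr rfl (fun l _ => hval l),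
    ← Finset.mul_prod_erase Finset.univ _ (Finset.mem_univ i), if_pos rfl,
    Finset.prod_congr rfl (fun l hl => if_neg (Finset.ne_of_mem_erase hl)),
    Finset.prod_const, Finset.card_erase_of_mem (Finset.mem_univ i), Finset.card_univ,
    Fintype.card_fin]


lemma unitary_conj_pow {N : ℕ} (U : Matrix.unitaryGroup (Fin N) ℂ)
    (A : Matrix (Fin N) (Fin N) ℂ) (n : ℕ) :
    ((U : Matrix (Fin N) (Fin N) ℂ)ᴴ * A * (U : Matrix (Fin N) (Fin N) ℂ)) ^ n
      = (U : Matrix (Fin N) (Fin N) ℂ)ᴴ * A ^ n * (U : Matrix (Fin N) (Fin N) ℂ) := by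
  have hUU : (U : Matrix (Fin N) (Fin N) ℂ) * (U : Matrix (Fin N) (Fin N) ℂ)ᴴ = 1 := by
    rw [← Matrix.star_eq_conjTranspose]
    exact (Matrix.mem_unitaryGroup_iff).mp U.2
  have hUU' : (U : Matrix (Fin N) (Fin N) ℂ)ᴴ * (U : Matrix (Fin N) (Fin N) ℂ) = 1 := by
    rw [← Matrix.star_eq_conjTranspose]
    exact (Matrix.mem_unitaryGroup_iff').mp U.2
  have habs : ∀ X : Matrix (Fin N) (Fin N) ℂ,
      (U : Matrix (Fin N) (Fin N) ℂ) * ((U : Matrix (Fin N) (Fin N) ℂ)ᴴ * X) = X := by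
    intro X
    rw [← Matrix.mul_assoc, hUU, Matrix.one_mul]
  induction n with
  | zero => simp [pow_zero, Matrix.mul_one, hUU']
  | succ n ih =>
    rw [pow_succ, pow_succ, ih]
    simp only [Matrix.mul_assoc, habs]


lemma matKey {N : ℕ} (U : Matrix.unitaryGroup (Fin N) ℂ)
    (d : Fin N → ℂ) (j k : ℕ) :
    ((U : Matrix (Fin N) (Fin N) ℂ)ᴴ * Matrix.diagonal d *
        (U : Matrix (Fin N) (Fin N) ℂ))ᴴ ^ j *
      ((U : Matrix (Fin N) (Fin N) ℂ)ᴴ * Matrix.diagonal d *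
        (U : Matrix (Fin N) (Fin N) ℂ)) ^ k
      = (U : Matrix (Fin N) (Fin N) ℂ)ᴴ *
          Matrix.diagonal (fun i => (starRingEnd ℂ (d i)) ^ j * (d i) ^ k) *
          (U : Matrix (Fin N) (Fin N) ℂ) := by
  have hUU : (U : Matrix (Fin N) (Fin N) ℂ) * (U : Matrix (Fin N) (Fin N) ℂ)ᴴ = 1 := by
    rw [← Matrix.star_eq_conjTranspose]
    exact (Matrix.mem_unitaryGroup_iff).mp U.2
  have habs : ∀ X : Matrix (Fin N) (Fin N) ℂ,
      (U : Matrix (Fin N) (Fin N) ℂ) * ((U : Matrix (Fin N) (Fin N) ℂ)ᴴ * X) = X := by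
    intro X; rw [← Matrix.mul_assoc, hUU, Matrix.one_mul]
  have hadj : ((U : Matrix (Fin N) (Fin N) ℂ)ᴴ * Matrix.diagonal d *
      (U : Matrix (Fin N) (Fin N) ℂ))ᴴ
      = (U : Matrix (Fin N) (Fin N) ℂ)ᴴ * Matrix.diagonal (star d) *
        (U : Matrix (Fin N) (Fin N) ℂ) := by
    rw [Matrix.conjTranspose_mul, Matrix.conjTranspose_mul, Matrix.conjTranspose_conjTranspose,
      Matrix.diagonal_conjTranspose, Matrix.mul_assoc]
  rw [hadj, unitary_conj_pow, unitary_conj_pow]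
  simp only [Matrix.mul_assoc, habs]
  simp only [← Matrix.mul_assoc]
  rw [Matrix.diagonal_pow, Matrix.diagonal_pow,
    Matrix.mul_assoc ((U : Matrix (Fin N) (Fin N) ℂ)ᴴ), Matrix.diagonal_mul_diagonal]
  congr 2

lemma entry {N : ℕ} (V : Matrix (Fin N) (Fin N) ℂ) (e : Fin N → ℂ) (a b : Fin N) :
    (Vᴴ * Matrix.diagonal e * V) a b
      = ∑ i, starRingEnd ℂ (V i a) * (e i * V i b) := by
  rw [Matrix.mul_assoc, Matrix.mul_apply]
  refine Finset.sum_congr rfl fun i _ => ?_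
  rw [Matrix.conjTranspose_apply, Matrix.diagonal_mul, starRingEnd_apply]


/-- For the measure `μ_h` on the normal `N×N` matrices defined by
`∫ f dμ_h = (πh)^{-N} ∫_{U(N)} ∫_{ℂ^N} f(U*DU) e^{-‖D‖²/h} dD dU`
(`dU` normalized Haar measure on `U(N)`, `dD` Lebesgue measure on `ℂ^N`), one has
`∫ Z^{*j} Z^k dμ_h(Z) = δ_{jk} k! h^k I` (entrywise). -/
theorem stmt_15 (N : ℕ) (hN : 0 < N)
    [MeasurableSpace (Matrix.unitaryGroup (Fin N) ℂ)]
    [BorelSpace (Matrix.unitaryGroup (Fin N) ℂ)]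
    (μ : Measure (Matrix.unitaryGroup (Fin N) ℂ))
    [IsProbabilityMeasure μ]
    (hleft : ∀ V : Matrix.unitaryGroup (Fin N) ℂ,
      MeasurePreserving (fun U => V * U) μ μ)
    (hright : ∀ V : Matrix.unitaryGroup (Fin N) ℂ,
      MeasurePreserving (fun U => U * V) μ μ)
    (h : ℝ) (hh : 0 < h) (j k : ℕ) :
    ∀ a b : Fin N,
      (((Real.pi * h) ^ N : ℂ))⁻¹ *
        (∫ U : Matrix.unitaryGroup (Fin N) ℂ,
          ∫ d : Fin N → ℂ,
            ((((U : Matrix (Fin N) (Fin N) ℂ)ᴴ * Matrix.diagonal d *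
                (U : Matrix (Fin N) (Fin N) ℂ))ᴴ ^ j *
              ((U : Matrix (Fin N) (Fin N) ℂ)ᴴ * Matrix.diagonal d *
                (U : Matrix (Fin N) (Fin N) ℂ)) ^ k) a b) *
              Complex.ofReal (Real.exp (-(∑ i, Complex.normSq (d i)) / h))
            ∂volume ∂μ)
        = if j = k then (k.factorial : ℂ) * (h : ℂ) ^ k *
            (1 : Matrix (Fin N) (Fin N) ℂ) a b else 0 := by
  intro a b
  have hinner : ∀ U : Matrix.unitaryGroup (Fin N) ℂ,
      (∫ d : Fin N → ℂ,
        ((((U : Matrix (Fin N) (Fin N) ℂ)ᴴ * Matrix.diagonal d *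
            (U : Matrix (Fin N) (Fin N) ℂ))ᴴ ^ j *
          ((U : Matrix (Fin N) (Fin N) ℂ)ᴴ * Matrix.diagonal d *
            (U : Matrix (Fin N) (Fin N) ℂ)) ^ k) a b) *
          Complex.ofReal (Real.exp (-(∑ i, Complex.normSq (d i)) / h)))
      = ((if j = k then ((Real.pi : ℂ) * h) * (k.factorial : ℂ) * (h : ℂ) ^ k else 0) *
          ((Real.pi : ℂ) * h) ^ (N - 1)) * (1 : Matrix (Fin N) (Fin N) ℂ) a b := by
    intro U
    have hUU' : (U : Matrix (Fin N) (Fin N) ℂ)ᴴ * (U : Matrix (Fin N) (Fin N) ℂ) = 1 := by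
      rw [← Matrix.star_eq_conjTranspose]
      exact (Matrix.mem_unitaryGroup_iff').mp U.2
    have hrw : ∀ d : Fin N → ℂ,
        ((((U : Matrix (Fin N) (Fin N) ℂ)ᴴ * Matrix.diagonal d *
            (U : Matrix (Fin N) (Fin N) ℂ))ᴴ ^ j *
          ((U : Matrix (Fin N) (Fin N) ℂ)ᴴ * Matrix.diagonal d *
            (U : Matrix (Fin N) (Fin N) ℂ)) ^ k) a b) *
          Complex.ofReal (Real.exp (-(∑ i, Complex.normSq (d i)) / h))
        = ∑ i, (starRingEnd ℂ ((U : Matrix (Fin N) (Fin N) ℂ) i a) *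
              (U : Matrix (Fin N) (Fin N) ℂ) i b) *
            ((starRingEnd ℂ (d i)) ^ j * (d i) ^ k *
              (Real.exp (-(∑ l, Complex.normSq (d l)) / h) : ℂ)) := by
      intro d
      rw [matKey, entry, Finset.sum_mul]
      refine Finset.sum_congr rfl fun i _ => ?_
      ring
    simp_rw [hrw]
    rw [integral_finset_sum _ (fun i _ => (integrable_g N h hh j k i).const_mul _)]
    simp_rw [integral_const_mul, prodD N h hh j k]
    rw [← Finset.sum_mul]
    have hsum : (∑ i, starRingEnd ℂ ((U : Matrix (Fin N) (Fin N) ℂ) i a) *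
        (U : Matrix (Fin N) (Fin N) ℂ) i b) = (1 : Matrix (Fin N) (Fin N) ℂ) a b := by
      rw [← hUU', Matrix.mul_apply]
      refine Finset.sum_congr rfl fun i _ => ?_
      rw [Matrix.conjTranspose_apply, starRingEnd_apply]
    rw [hsum]
    ring
  simp_rw [hinner]
  rw [integral_const, measureReal_def, measure_univ, ENNReal.toReal_one, one_smul]
  have hπh : ((Real.pi : ℂ) * h) ≠ 0 :=
    mul_ne_zero (Complex.ofReal_ne_zero.mpr Real.pi_ne_zero)
      (Complex.ofReal_ne_zero.mpr hh.ne')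
  have hcoe : (((Real.pi * h) ^ N : ℂ)) = ((Real.pi : ℂ) * h) ^ N := by
    push_cast
    ring
  rw [hcoe]
  by_cases hjk : j = k
  · rw [if_pos hjk, if_pos hjk]
    have hpow : ((Real.pi : ℂ) * h) * ((Real.pi : ℂ) * h) ^ (N - 1)
        = ((Real.pi : ℂ) * h) ^ N := by
      rw [← pow_succ']
      congr 1
      omega
    calc (((Real.pi : ℂ) * h) ^ N)⁻¹ *
          ((((Real.pi : ℂ) * h) * (k.factorial : ℂ) * (h : ℂ) ^ k *
            ((Real.pi : ℂ) * h) ^ (N - 1)) * (1 : Matrix (Fin N) (Fin N) ℂ) a b)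
        = ((((Real.pi : ℂ) * h) ^ N)⁻¹ * (((Real.pi : ℂ) * h) * ((Real.pi : ℂ) * h) ^ (N - 1)))
            * ((k.factorial : ℂ) * (h : ℂ) ^ k * (1 : Matrix (Fin N) (Fin N) ℂ) a b) := by
          ring
      _ = (k.factorial : ℂ) * (h : ℂ) ^ k * (1 : Matrix (Fin N) (Fin N) ℂ) a b := by
          rw [hpow, inv_mul_cancel₀ (pow_ne_zero _ hπh), one_mul]
  · rw [if_neg hjk, if_neg hjk, zero_mul, zero_mul, mul_zero]
end

section
/- Under the unitary isomorphism ι: Z^k χ_j ↦ z^k ⊗ χ_j from the reproducing kernel space H_h over the normal matrices onto L²_hol(ℂ, dμ_h) ⊗ ℂ^N, the Toeplitz operator T^{(h)}_{g^#} with spectral symbol g^# corresponds to T^{(h)}_g ⊗ I, where T^{(h)}_g is the scalar Toeplitz operator with symbol g on the Segal-Bargmann space L²_hol(ℂ, dμ_h). -/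
open MeasureTheory Matrix Finset Real


noncomputable def GAM (h : ℝ) : ℂ → ℂ := fun z => ((Real.exp (-(Complex.normSq z)/h)) : ℂ)

noncomputable def PHI (h : ℝ) (g : ℂ → ℂ) (k l : ℕ) : ℂ → ℂ :=
  fun z => (starRingEnd ℂ) z ^ l * g z * z ^ k * ((Real.exp (-(Complex.normSq z)/h)) : ℂ)

-- conjugation of powers
lemma conj_pow_aux {n : ℕ} (A B : Matrix (Fin n) (Fin n) ℂ)
    (h1 : Aᴴ * A = 1) (h2 : A * Aᴴ = 1) (m : ℕ) :
    (A * B * Aᴴ) ^ m = A * B ^ m * Aᴴ := by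
  induction m with
  | zero => simp [h2]
  | succ m ih =>
      rw [pow_succ, ih, pow_succ]
      calc A * B ^ m * Aᴴ * (A * B * Aᴴ) = A * B ^ m * (Aᴴ * A) * B * Aᴴ := by
            simp only [Matrix.mul_assoc]
        _ = A * (B ^ m * B) * Aᴴ := by rw [h1]; simp only [Matrix.mul_assoc, Matrix.mul_one]
        _ = _ := by simp only [Matrix.mul_assoc]

lemma quad_aux {n : ℕ} (A : Matrix (Fin n) (Fin n) ℂ) (F : Fin n → ℂ) (χ η : Fin n → ℂ) :
    ∑ a, (starRingEnd ℂ) (η a) * ((A * Matrix.diagonal F * Aᴴ) *ᵥ χ) a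
      = ∑ i, F i * ((∑ a, (starRingEnd ℂ) (η a) * A a i) *
          (∑ b, (starRingEnd ℂ) (A b i) * χ b)) := by
  have entry : ∀ x y, (A * Matrix.diagonal F * Aᴴ) x y
      = ∑ j, A x j * F j * (starRingEnd ℂ) (A y j) := by
    intro x y
    rw [Matrix.mul_apply]
    refine Finset.sum_congr rfl fun j _ => ?_
    simp [Matrix.mul_diagonal, Matrix.conjTranspose_apply]
  calc ∑ a, (starRingEnd ℂ) (η a) * ((A * Matrix.diagonal F * Aᴴ) *ᵥ χ) a
      = ∑ a, ∑ j, ∑ b, (starRingEnd ℂ) (η a) *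
          (A a j * F j * (starRingEnd ℂ) (A b j) * χ b) := by
        refine Finset.sum_congr rfl fun a _ => ?_
        simp only [Matrix.mulVec, dotProduct, entry, Finset.mul_sum, Finset.sum_mul]
        rw [Finset.sum_comm]
    _ = ∑ j, ∑ a, ∑ b, (starRingEnd ℂ) (η a) *
          (A a j * F j * (starRingEnd ℂ) (A b j) * χ b) := Finset.sum_comm
    _ = ∑ i, F i * ((∑ a, (starRingEnd ℂ) (η a) * A a i) *
          (∑ b, (starRingEnd ℂ) (A b i) * χ b)) := by
        refine Finset.sum_congr rfl fun j _ => ?_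
        rw [Finset.sum_mul_sum, Finset.mul_sum]
        refine Finset.sum_congr rfl fun a _ => ?_
        rw [Finset.mul_sum]
        exact Finset.sum_congr rfl fun b _ => by ring

lemma ortho_aux {n : ℕ} (A : Matrix (Fin n) (Fin n) ℂ) (h2 : A * Aᴴ = 1) (χ η : Fin n → ℂ) :
    ∑ i, ((∑ a, (starRingEnd ℂ) (η a) * A a i) * (∑ b, (starRingEnd ℂ) (A b i) * χ b))
      = ∑ a, (starRingEnd ℂ) (η a) * χ a := by
  have key : ∀ a b, (∑ i, A a i * (starRingEnd ℂ) (A b i)) = (1 : Matrix (Fin n) (Fin n) ℂ) a b := by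
    intro a b
    rw [← h2]
    simp [Matrix.mul_apply, Matrix.conjTranspose_apply]
  calc ∑ i, ((∑ a, (starRingEnd ℂ) (η a) * A a i) * (∑ b, (starRingEnd ℂ) (A b i) * χ b))
      = ∑ a, ∑ b, ((starRingEnd ℂ) (η b) * χ a) * ∑ i, A b i * (starRingEnd ℂ) (A a i) := by
        simp only [Finset.sum_mul, Finset.mul_sum]
        rw [Finset.sum_comm]
        refine Finset.sum_congr rfl fun a _ => ?_
        rw [Finset.sum_comm]
        refine Finset.sum_congr rfl fun b _ => ?_
        refine Finset.sum_congr rfl fun i _ => ?_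
        ring
    _ = ∑ a, ∑ b, ((starRingEnd ℂ) (η b) * χ a) * (1 : Matrix (Fin n) (Fin n) ℂ) b a := by
        simp_rw [key]
    _ = ∑ a, (starRingEnd ℂ) (η a) * χ a := by
        simp [Matrix.one_apply, Finset.mul_sum, mul_ite]

lemma gauss_integrable_s16 {b : ℝ} (hb : 0 < b) : Integrable (fun v : ℂ => rexp (- b * ‖v‖^2)) := by
  have := GaussianFourier.integrable_cexp_neg_mul_sq_norm_add (V := ℂ)
    (b := (b:ℂ)) (by simpa using hb) 0 0
  refine this.norm.congr (Filter.Eventually.of_forall fun z => ?_)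
  simp only [zero_mul, add_zero, Complex.norm_exp,
    ← Complex.ofReal_pow, ← Complex.ofReal_neg, ← Complex.ofReal_mul, Complex.ofReal_re]

lemma normSq_eq (h : ℝ) (z : ℂ) : -(Complex.normSq z)/h = -(1/h) * ‖z‖^2 := by
  rw [← Complex.sq_norm]; ring

lemma integral_cplx_ofReal {α : Type*} [MeasurableSpace α] {μ : Measure α} (f : α → ℝ) :
    ∫ x, ((f x : ℝ) : ℂ) ∂μ = ((∫ x, f x ∂μ : ℝ) : ℂ) := integral_ofReal (𝕜 := ℂ)

lemma GAM_integrable {h : ℝ} (hh : 0 < h) : Integrable (GAM h) := by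
  have h2 := (gauss_integrable_s16 (b := 1/h) (by positivity)).ofReal (𝕜 := ℂ)
  refine h2.congr (Filter.Eventually.of_forall fun z => ?_)
  show _ = ((Real.exp (-(Complex.normSq z)/h) : ℝ) : ℂ)
  rw [normSq_eq]
  rfl

lemma GAM_integral {h : ℝ} (hh : 0 < h) : ∫ z : ℂ, GAM h z = ((Real.pi * h : ℝ) : ℂ) := by
  unfold GAM
  simp_rw [normSq_eq]
  rw [integral_cplx_ofReal (fun z : ℂ => rexp (-(1/h) * ‖z‖^2))]
  norm_cast
  rw [GaussianFourier.integral_rexp_neg_mul_sq_norm (by positivity : (0:ℝ) < 1/h)]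
  simp only [Complex.finrank_real_complex]
  norm_num

lemma pow_mul_exp_le {c : ℝ} (hc : 0 < c) (m : ℕ) (u : ℝ) (hu : 0 ≤ u) :
    u ^ m * Real.exp (-(c * u^2)) ≤ 1 + (Nat.factorial m : ℝ) / c ^ m := by
  have key : (c*u^2)^m / (Nat.factorial m : ℝ) ≤ Real.exp (c*u^2) :=
    Real.pow_div_factorial_le_exp (x := c*u^2) (by positivity) m
  have h1 : u ^ m ≤ 1 + (u^2)^m := by
    rcases le_total u 1 with hu1 | hu1
    · have h2 : u ^ m ≤ 1 := pow_le_one₀ hu hu1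
      have : (0:ℝ) ≤ (u^2)^m := by positivity
      linarith
    · have h2 : u ^ m ≤ (u^2)^m := pow_le_pow_left₀ hu (by nlinarith) m
      linarith
  have e1 : Real.exp (-(c*u^2)) ≤ 1 := Real.exp_le_one_iff.mpr (neg_nonpos.mpr (by positivity))
  have e2 : (u^2)^m * Real.exp (-(c*u^2)) ≤ (Nat.factorial m : ℝ)/c^m := by
    have h3 : (u^2)^m = (c*u^2)^m / c^m := by rw [mul_pow]; field_simp
    have h4 : (c*u^2)^m ≤ (Nat.factorial m : ℝ) * Real.exp (c*u^2) := by
      rw [div_le_iff₀ (by positivity : (0:ℝ) < (Nat.factorial m : ℝ))] at key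
      linarith
    rw [h3, Real.exp_neg, div_mul_eq_mul_div,
      div_le_div_iff₀ (by positivity) (by positivity)]
    have hep := Real.exp_pos (c*u^2)
    calc (c*u^2)^m * (Real.exp (c*u^2))⁻¹ * c^m
        ≤ ((Nat.factorial m : ℝ) * Real.exp (c*u^2)) * (Real.exp (c*u^2))⁻¹ * c^m := by
          apply mul_le_mul_of_nonneg_right (mul_le_mul_of_nonneg_right h4 (by positivity))
            (by positivity)
      _ = (Nat.factorial m : ℝ) * c^m := by field_simp
  have hnn : (0:ℝ) ≤ Real.exp (-(c*u^2)) := le_of_lt (Real.exp_pos _)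
  calc u^m * Real.exp (-(c*u^2)) ≤ (1 + (u^2)^m) * Real.exp (-(c*u^2)) :=
        mul_le_mul_of_nonneg_right h1 hnn
    _ = Real.exp (-(c*u^2)) + (u^2)^m * Real.exp (-(c*u^2)) := by ring
    _ ≤ 1 + (Nat.factorial m : ℝ)/c^m := by linarith

lemma PHI_integrable {h : ℝ} (hh : 0 < h) {g : ℂ → ℂ} (hg : Measurable g)
    {C : ℝ} (hgb : ∀ z, ‖g z‖ ≤ C) (k l : ℕ) : Integrable (PHI h g k l) := by
  have hC : 0 ≤ C := le_trans (norm_nonneg _) (hgb 0)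
  have hcpos : (0:ℝ) < 1/(2*h) := by positivity
  set c : ℝ := 1/(2*h) with hc
  set m : ℕ := k + l with hm
  set B : ℝ := C * (1 + (Nat.factorial m : ℝ) / c ^ m) with hB
  have hmeas : AEStronglyMeasurable (PHI h g k l) volume := by
    apply Measurable.aestronglyMeasurable
    exact (((Complex.continuous_conj.pow l).measurable.mul hg).mul
        (continuous_pow k).measurable).mul
      (Complex.continuous_ofReal.comp
        (Real.continuous_exp.comp ((Complex.continuous_normSq.neg).div_const h))).measurable
  refine Integrable.mono' (((gauss_integrable_s16 hcpos).const_mul B)) hmeas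
    (Filter.Eventually.of_forall fun z => ?_)
  have hnorm : ‖PHI h g k l z‖
      = ‖z‖^l * ‖g z‖ * ‖z‖^k * Real.exp (-(Complex.normSq z)/h) := by
    unfold PHI
    simp only [norm_mul, norm_pow, Complex.norm_conj, Complex.norm_real, Real.norm_eq_abs,
      abs_of_pos (Real.exp_pos _)]
  rw [hnorm]
  have hpm : ‖z‖^l * ‖z‖^k = ‖z‖^m := by rw [← pow_add]; congr 1; omega
  have h5 : ‖z‖^l * ‖g z‖ * ‖z‖^k ≤ C * ‖z‖^m := by
    calc ‖z‖^l * ‖g z‖ * ‖z‖^k = ‖g z‖ * (‖z‖^l * ‖z‖^k) := by ring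
      _ ≤ C * (‖z‖^l * ‖z‖^k) := mul_le_mul_of_nonneg_right (hgb z) (by positivity)
      _ = C * ‖z‖^m := by rw [hpm]
  have hstep1 : ‖z‖^l * ‖g z‖ * ‖z‖^k * Real.exp (-(Complex.normSq z)/h)
      ≤ C * (‖z‖^m * Real.exp (-(Complex.normSq z)/h)) := by
    rw [← mul_assoc]
    exact mul_le_mul_of_nonneg_right h5 (le_of_lt (Real.exp_pos _))
  have hsplit : Real.exp (-(Complex.normSq z)/h)
      = Real.exp (-(c * ‖z‖^2)) * Real.exp (-(c * ‖z‖^2)) := by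
    rw [← Real.exp_add, normSq_eq]
    congr 1
    rw [hc]
    field_simp
    ring
  have hstep2 : ‖z‖^m * Real.exp (-(Complex.normSq z)/h)
      ≤ (1 + (Nat.factorial m : ℝ)/c^m) * Real.exp (-(c*‖z‖^2)) := by
    rw [hsplit, ← mul_assoc]
    exact mul_le_mul_of_nonneg_right (pow_mul_exp_le hcpos m _ (norm_nonneg z))
      (le_of_lt (Real.exp_pos _))
  calc ‖z‖^l * ‖g z‖ * ‖z‖^k * Real.exp (-(Complex.normSq z)/h)
      ≤ C * (‖z‖^m * Real.exp (-(Complex.normSq z)/h)) := hstep1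
    _ ≤ C * ((1 + (Nat.factorial m : ℝ)/c^m) * Real.exp (-(c*‖z‖^2))) := by
        exact mul_le_mul_of_nonneg_left hstep2 hC
    _ = B * Real.exp (-c * ‖z‖^2) := by rw [hB]; ring_nf

lemma inner_int {N : ℕ} (h : ℝ) (g : ℂ → ℂ) (k l : ℕ)
    (hφ : Integrable (PHI h g k l)) (hγ : Integrable (GAM h)) (v : Fin N → ℂ) :
    ∫ d : Fin N → ℂ, (∑ i, (starRingEnd ℂ) (d i) ^ l * g (d i) * (d i) ^ k * v i) *
        Complex.ofReal (Real.exp (-(∑ i, Complex.normSq (d i))/h))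
      = (∑ i, v i) * ((∫ z : ℂ, PHI h g k l z) * (∫ z : ℂ, GAM h z)^(N-1)) := by
  have hE : ∀ d : Fin N → ℂ,
      (Complex.ofReal (Real.exp (-(∑ i, Complex.normSq (d i))/h)) : ℂ) = ∏ j, GAM h (d j) := by
    intro d
    unfold GAM
    rw [← Complex.ofReal_prod, ← Real.exp_sum]
    congr 2
    rw [← Finset.sum_div]
    congr 1
    rw [Finset.sum_neg_distrib]
  have hpt : ∀ d : Fin N → ℂ,
      (∑ i, (starRingEnd ℂ) (d i) ^ l * g (d i) * (d i) ^ k * v i) *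
        Complex.ofReal (Real.exp (-(∑ i, Complex.normSq (d i))/h))
      = ∑ i, v i * ∏ j, (if j = i then PHI h g k l (d j) else GAM h (d j)) := by
    intro d
    rw [hE d, Finset.sum_mul]
    refine Finset.sum_congr rfl fun i _ => ?_
    rw [← Finset.mul_prod_erase univ (fun j => GAM h (d j)) (Finset.mem_univ i),
        ← Finset.mul_prod_erase univ
          (fun j => if j = i then PHI h g k l (d j) else GAM h (d j)) (Finset.mem_univ i),
        if_pos rfl]
    have he : ∏ j ∈ univ.erase i, (if j = i then PHI h g k l (d j) else GAM h (d j))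
        = ∏ j ∈ univ.erase i, GAM h (d j) :=
      Finset.prod_congr rfl fun j hj => if_neg (Finset.ne_of_mem_erase hj)
    rw [he]
    unfold PHI GAM
    ring
  rw [integral_congr_ae (Filter.Eventually.of_forall hpt)]
  have hint : ∀ i : Fin N, Integrable (fun d : Fin N → ℂ =>
      v i * ∏ j, (if j = i then PHI h g k l (d j) else GAM h (d j))) := by
    intro i
    refine Integrable.const_mul ?_ (v i)
    exact Integrable.fintype_prod (f := fun j z => if j = i then PHI h g k l z else GAM h z)
      (fun j => by by_cases hj : j = i <;> simp [hj, hφ, hγ])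
  rw [integral_finset_sum _ fun i _ => hint i]
  have hval : ∀ i : Fin N, (∫ d : Fin N → ℂ,
      v i * ∏ j, (if j = i then PHI h g k l (d j) else GAM h (d j)))
      = v i * ((∫ z : ℂ, PHI h g k l z) * (∫ z : ℂ, GAM h z)^(N-1)) := by
    intro i
    rw [MeasureTheory.integral_const_mul]
    congr 1
    rw [volume_pi, integral_fintype_prod_eq_prod (ι := Fin N) (E := fun _ => ℂ)
      (f := fun j z => if j = i then PHI h g k l z else GAM h z)]
    have hj : ∀ j : Fin N, (∫ z : ℂ, if j = i then PHI h g k l z else GAM h z)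
        = if j = i then (∫ z : ℂ, PHI h g k l z) else (∫ z : ℂ, GAM h z) := by
      intro j; by_cases hj : j = i <;> simp [hj]
    simp_rw [hj]
    rw [← Finset.mul_prod_erase univ _ (Finset.mem_univ i), if_pos rfl]
    congr 1
    rw [Finset.prod_congr rfl (fun j hje => if_neg (Finset.ne_of_mem_erase hje)),
      Finset.prod_const, Finset.card_erase_of_mem (Finset.mem_univ i), Finset.card_univ,
      Fintype.card_fin]
  simp_rw [hval]
  rw [← Finset.sum_mul]

lemma merge_aux {n : ℕ} (A X Y : Matrix (Fin n) (Fin n) ℂ) (h1 : Aᴴ * A = 1) :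
    (A * X * Aᴴ) * (A * Y * Aᴴ) = A * (X * Y) * Aᴴ := by
  have e : (A * X * Aᴴ) * (A * Y * Aᴴ) = A * X * (Aᴴ * A) * Y * Aᴴ := by
    simp only [Matrix.mul_assoc]
  rw [e, h1, Matrix.mul_one]
  simp only [Matrix.mul_assoc]

/-- Under the unitary isomorphism `ι : Z^k χ_j ↦ z^k ⊗ χ_j` of `H_h` (over the
normal matrices) onto `L²_hol(ℂ, dμ_h) ⊗ ℂ^N`, the Toeplitz operator with
spectral symbol `g^#` corresponds to `T_g ⊗ I`.  Concretely, all matrix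
elements agree:
`⟨T_{g^#} Z^k χ, Z^l η⟩_{H_h} = ⟨χ, η⟩ ⟨T_g z^k, z^l⟩_{L²_hol(ℂ,dμ_h)}`,
i.e. `∫ η* Z^{*l} g^#(Z) Z^k χ dμ_h(Z) = (∑_i η̄_i χ_i)·∫ z̄^l g(z) z^k dμ_h(z)`,
with the measure `μ_h` on normal matrices written via the parametrization
`Z = U D U*` and `g^#(UDU*) = U diag_i(g(d_i)) U*`. -/
theorem stmt_16 (N : ℕ) (hN : 0 < N)
    [MeasurableSpace (Matrix.unitaryGroup (Fin N) ℂ)]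
    [BorelSpace (Matrix.unitaryGroup (Fin N) ℂ)]
    (μ : Measure (Matrix.unitaryGroup (Fin N) ℂ))
    [IsProbabilityMeasure μ]
    (hleft : ∀ V : Matrix.unitaryGroup (Fin N) ℂ,
      MeasurePreserving (fun U => V * U) μ μ)
    (hright : ∀ V : Matrix.unitaryGroup (Fin N) ℂ,
      MeasurePreserving (fun U => U * V) μ μ)
    (h : ℝ) (hh : 0 < h)
    (g : ℂ → ℂ) (hg : Measurable g) (C : ℝ) (hgb : ∀ z : ℂ, ‖g z‖ ≤ C)
    (k l : ℕ) (χ η : Fin N → ℂ) :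
    (((Real.pi * h) ^ N : ℂ))⁻¹ *
      (∫ U : Matrix.unitaryGroup (Fin N) ℂ,
        ∫ d : Fin N → ℂ,
          (∑ a, (starRingEnd ℂ) (η a) *
            ((((U : Matrix (Fin N) (Fin N) ℂ) * Matrix.diagonal d *
                  (U : Matrix (Fin N) (Fin N) ℂ)ᴴ)ᴴ ^ l *
                ((U : Matrix (Fin N) (Fin N) ℂ) *
                  Matrix.diagonal (fun i => g (d i)) *
                  (U : Matrix (Fin N) (Fin N) ℂ)ᴴ) *
                ((U : Matrix (Fin N) (Fin N) ℂ) * Matrix.diagonal d *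
                  (U : Matrix (Fin N) (Fin N) ℂ)ᴴ) ^ k).mulVec χ a)) *
            Complex.ofReal (Real.exp (-(∑ i, Complex.normSq (d i)) / h))
          ∂volume ∂μ)
      = (∑ i, (starRingEnd ℂ) (η i) * χ i) *
          (((Real.pi * h : ℂ))⁻¹ *
            ∫ z : ℂ, ((starRingEnd ℂ) z) ^ l * g z * z ^ k *
              Complex.ofReal (Real.exp (-(Complex.normSq z) / h)) ∂volume) := by
  have hφ := PHI_integrable hh hg hgb k l
  have hγ := GAM_integrable hh
  have key : ∀ U : Matrix.unitaryGroup (Fin N) ℂ,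
      (∫ d : Fin N → ℂ,
          (∑ a, (starRingEnd ℂ) (η a) *
            ((((U : Matrix (Fin N) (Fin N) ℂ) * Matrix.diagonal d *
                  (U : Matrix (Fin N) (Fin N) ℂ)ᴴ)ᴴ ^ l *
                ((U : Matrix (Fin N) (Fin N) ℂ) *
                  Matrix.diagonal (fun i => g (d i)) *
                  (U : Matrix (Fin N) (Fin N) ℂ)ᴴ) *
                ((U : Matrix (Fin N) (Fin N) ℂ) * Matrix.diagonal d *
                  (U : Matrix (Fin N) (Fin N) ℂ)ᴴ) ^ k).mulVec χ a)) *
            Complex.ofReal (Real.exp (-(∑ i, Complex.normSq (d i)) / h)))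
      = (∑ a, (starRingEnd ℂ) (η a) * χ a) *
          ((∫ z : ℂ, PHI h g k l z) * (∫ z : ℂ, GAM h z)^(N-1)) := by
    intro U
    set A := (U : Matrix (Fin N) (Fin N) ℂ) with hA
    have hmem := U.prop
    rw [Matrix.mem_unitaryGroup_iff'] at hmem
    have h1 : Aᴴ * A = 1 := by
      rw [← Matrix.star_eq_conjTranspose]; exact hmem
    have hmem2 := U.prop
    rw [Matrix.mem_unitaryGroup_iff] at hmem2
    have h2 : A * Aᴴ = 1 := by
      rw [← Matrix.star_eq_conjTranspose]; exact hmem2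
    have hrw : ∀ d : Fin N → ℂ,
        (∑ a, (starRingEnd ℂ) (η a) *
            (((A * Matrix.diagonal d * Aᴴ)ᴴ ^ l *
                (A * Matrix.diagonal (fun i => g (d i)) * Aᴴ) *
                (A * Matrix.diagonal d * Aᴴ) ^ k).mulVec χ a)) *
            Complex.ofReal (Real.exp (-(∑ i, Complex.normSq (d i)) / h))
        = (∑ i, (starRingEnd ℂ) (d i) ^ l * g (d i) * (d i) ^ k *
            ((∑ a, (starRingEnd ℂ) (η a) * A a i) * (∑ b, (starRingEnd ℂ) (A b i) * χ b))) *
            Complex.ofReal (Real.exp (-(∑ i, Complex.normSq (d i)) / h)) := by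
      intro d
      congr 1
      have hct : (A * Matrix.diagonal d * Aᴴ)ᴴ = A * Matrix.diagonal (star d) * Aᴴ := by
        simp [Matrix.conjTranspose_mul, Matrix.diagonal_conjTranspose, Matrix.mul_assoc]
      have hM : (A * Matrix.diagonal d * Aᴴ)ᴴ ^ l *
            (A * Matrix.diagonal (fun i => g (d i)) * Aᴴ) *
            (A * Matrix.diagonal d * Aᴴ) ^ k
          = A * Matrix.diagonal
              (fun i => (starRingEnd ℂ) (d i) ^ l * g (d i) * (d i) ^ k) * Aᴴ := by
        rw [hct, conj_pow_aux _ _ h1 h2, conj_pow_aux _ _ h1 h2, merge_aux _ _ _ h1,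
          merge_aux _ _ _ h1, Matrix.diagonal_pow, Matrix.diagonal_pow,
          Matrix.diagonal_mul_diagonal, Matrix.diagonal_mul_diagonal]
        congr 2
      rw [hM]
      simpa using quad_aux A
        (fun i => (starRingEnd ℂ) (d i) ^ l * g (d i) * (d i) ^ k) χ η
    rw [integral_congr_ae (Filter.Eventually.of_forall hrw),
      inner_int h g k l hφ hγ _, ortho_aux A h2 χ η]
  rw [integral_congr_ae (Filter.Eventually.of_forall key), integral_const]
  simp only [probReal_univ, one_smul]
  rw [GAM_integral hh]
  have hfin : (∫ z : ℂ, PHI h g k l z)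
      = ∫ z : ℂ, ((starRingEnd ℂ) z) ^ l * g z * z ^ k *
              Complex.ofReal (Real.exp (-(Complex.normSq z) / h)) := rfl
  rw [hfin]
  set I : ℂ := ∫ z : ℂ, ((starRingEnd ℂ) z) ^ l * g z * z ^ k *
              Complex.ofReal (Real.exp (-(Complex.normSq z) / h)) with hI
  set S : ℂ := ∑ i, (starRingEnd ℂ) (η i) * χ i with hS
  obtain ⟨M0, rfl⟩ : ∃ M0, N = M0 + 1 := ⟨N - 1, by omega⟩
  have hπ : ((Real.pi * h : ℝ) : ℂ) ≠ 0 :=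
    Complex.ofReal_ne_zero.mpr (by positivity)
  push_cast
  try simp only [Nat.add_sub_cancel]
  push_cast at hπ
  have hh0 : (h:ℂ) ≠ 0 := Complex.ofReal_ne_zero.mpr hh.ne'
  field_simp
  ring
end
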